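/- arXiv:quant-ph/0308089 — 7 statements merged into one kernel-verified Lean document; each statement's English description precedes it below -/
import Mathlib

section
/- Let N ≥ 1 and k ≥ 1. Suppose Φ : Matrix (Fin N) (Fin N) ℂ → Matrix (Fin N) (Fin N) ℂ is given by Φ(ρ) = ∑_{j=1}^k ε_j • (A_j * ρ * A_jᴴ), where A_1, …, A_k are N×N complex matrices forming a linearly independent family and each ε_j ∈ {−1, 1}. Then Φ is completely positive if and only if ε_j = 1 for every j ∈ {1, …, k}. -/
open scoped ComplexOrder Matrix

/-- `Φ` is completely positive: for every `m ≥ 1`, the map `id_m ⊗ Φ` (acting blockwise on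
`m × m` block matrices with `N × N` blocks) maps positive semidefinite matrices to positive
semidefinite matrices. -/
def CompletelyPositive {N : ℕ}
    (Φ : Matrix (Fin N) (Fin N) ℂ → Matrix (Fin N) (Fin N) ℂ) : Prop :=
  ∀ m : ℕ, 1 ≤ m → ∀ M : Matrix (Fin m × Fin N) (Fin m × Fin N) ℂ, M.PosSemidef →
    (Matrix.of fun p q : Fin m × Fin N =>
      Φ (Matrix.of fun a b : Fin N => M (p.1, a) (q.1, b)) p.2 q.2).PosSemidef

set_option linter.unusedSectionVars false
set_option linter.unusedVariables false

section helpers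

variable {n : Type*} [Fintype n] [DecidableEq n]

lemma psd_add {a b : Matrix n n ℂ} (ha : a.PosSemidef) (hb : b.PosSemidef) :
    (a + b).PosSemidef :=
  .of_dotProduct_mulVec_nonneg (ha.1.add hb.1) fun x => by
    rw [Matrix.add_mulVec, dotProduct_add]
    exact add_nonneg (ha.dotProduct_mulVec_nonneg x) (hb.dotProduct_mulVec_nonneg x)

lemma psd_sum {ι : Type*} (s : Finset ι) (f : ι → Matrix n n ℂ)
    (h : ∀ i ∈ s, (f i).PosSemidef) : (∑ i ∈ s, f i).PosSemidef := by
  classical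
  induction s using Finset.induction_on with
  | empty => simpa using Matrix.PosSemidef.zero
  | insert _ _ hi ih =>
    rw [Finset.sum_insert hi]
    exact psd_add (h _ (Finset.mem_insert_self _ _))
      (ih fun i hmem => h i (Finset.mem_insert_of_mem hmem))

lemma outer_quad (w y : n → ℂ) :
    star y ⬝ᵥ (Matrix.vecMulVec w (star w)) *ᵥ y
      = (star y ⬝ᵥ w) * star (star y ⬝ᵥ w) := by
  have h0 : Matrix.vecMulVec w (star w) *ᵥ y = (star w ⬝ᵥ y) • w := by
    ext i
    simp only [Matrix.mulVec, Matrix.vecMulVec_apply, dotProduct, Pi.smul_apply,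
      smul_eq_mul, Finset.sum_mul, Finset.mul_sum]
    exact Finset.sum_congr rfl fun i _ => by ring
  have h1 : star w ⬝ᵥ y = star (star y ⬝ᵥ w) := by
    simp only [dotProduct, star_sum, star_mul', star_star, Pi.star_apply]
    exact Finset.sum_congr rfl fun i _ => by ring
  rw [h0, dotProduct_smul, h1, smul_eq_mul]
  ring

lemma psd_outer (u : n → ℂ) : (Matrix.vecMulVec u (star u)).PosSemidef := by
  refine .of_dotProduct_mulVec_nonneg ?_ ?_
  · ext i j
    simp [Matrix.vecMulVec_apply, Matrix.conjTranspose_apply, mul_comm]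
  · intro x
    rw [outer_quad]
    rw [mul_comm]
    exact star_mul_self_nonneg _

lemma sum_mulVec' {ι : Type*} [Fintype ι] (M : ι → Matrix n n ℂ) (y : n → ℂ) :
    (∑ i, M i) *ᵥ y = ∑ i, M i *ᵥ y := by
  ext p
  simp only [Matrix.mulVec, dotProduct, Matrix.sum_apply, Finset.sum_mul,
    Finset.sum_apply]
  exact Finset.sum_comm

lemma dotProduct_sum' {ι : Type*} [Fintype ι] (a : n → ℂ) (z : ι → n → ℂ) :
    a ⬝ᵥ (∑ i, z i) = ∑ i, a ⬝ᵥ z i := by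
  simp only [dotProduct, Finset.sum_apply, Finset.mul_sum]
  exact Finset.sum_comm

end helpers

private lemma cp_of_pos (N k : ℕ) (hN : 1 ≤ N) (hk : 1 ≤ k)
    (A : Fin k → Matrix (Fin N) (Fin N) ℂ)
    (ε : Fin k → ℝ) (h1 : ∀ j, ε j = 1)
    (Φ : Matrix (Fin N) (Fin N) ℂ → Matrix (Fin N) (Fin N) ℂ)
    (hΦ : ∀ ρ, Φ ρ = ∑ j, ε j • (A j * ρ * (A j)ᴴ)) :
    CompletelyPositive Φ := by
  intro m hm M hM
  classical
  set B : Fin k → Matrix (Fin m × Fin N) (Fin m × Fin N) ℂ :=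
    fun j => Matrix.of fun p q => if p.1 = q.1 then A j p.2 q.2 else 0 with hB
  have key : (Matrix.of fun p q : Fin m × Fin N =>
      Φ (Matrix.of fun a b : Fin N => M (p.1, a) (q.1, b)) p.2 q.2)
      = ∑ j, B j * M * (B j)ᴴ := by
    ext p q
    simp only [Matrix.of_apply, hΦ, Matrix.sum_apply]
    refine Finset.sum_congr rfl fun j _ => ?_
    rw [Matrix.smul_apply, h1 j, one_smul]
    simp only [Matrix.mul_apply, Matrix.conjTranspose_apply, Matrix.of_apply, hB,
      Fintype.sum_prod_type, ite_mul, zero_mul, mul_ite, mul_zero,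
      Finset.sum_ite_eq, Finset.mem_univ, if_true, apply_ite (starRingEnd ℂ), map_zero]
    simp only [apply_ite (star : ℂ → ℂ), star_zero, mul_ite, mul_zero, Finset.sum_ite_irrel,
      Finset.sum_const_zero, Finset.sum_ite_eq, Finset.mem_univ, if_true]
  rw [key]
  exact psd_sum _ _ fun j _ => hM.mul_mul_conjTranspose_same (B j)

open scoped InnerProductSpace in
private lemma pos_of_cp (N k : ℕ) (hN : 1 ≤ N) (hk : 1 ≤ k)
    (A : Fin k → Matrix (Fin N) (Fin N) ℂ) (hA : LinearIndependent ℂ A)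
    (ε : Fin k → ℝ) (hε : ∀ j, ε j = 1 ∨ ε j = -1)
    (Φ : Matrix (Fin N) (Fin N) ℂ → Matrix (Fin N) (Fin N) ℂ)
    (hΦ : ∀ ρ, Φ ρ = ∑ j, ε j • (A j * ρ * (A j)ᴴ))
    (hCP : CompletelyPositive Φ) : ∀ j, ε j = 1 := by
  classical
  intro j
  rcases hε j with h | h
  · exact h
  exfalso
  set u : Fin N × Fin N → ℂ := fun pa => if pa.1 = pa.2 then 1 else 0 with hu
  have hC := hCP N hN _ (psd_outer u)
  set v : Fin k → EuclideanSpace ℂ (Fin N × Fin N) :=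
    fun i => WithLp.toLp 2 (fun pa : Fin N × Fin N => A i pa.2 pa.1) with hv
  let f : Matrix (Fin N) (Fin N) ℂ →ₗ[ℂ] EuclideanSpace ℂ (Fin N × Fin N) :=
    { toFun := fun X => WithLp.toLp 2 (fun pa : Fin N × Fin N => X pa.2 pa.1)
      map_add' := fun X Y => rfl
      map_smul' := fun c X => rfl }
  have hker : LinearMap.ker f = ⊥ := by
    rw [LinearMap.ker_eq_bot]
    intro X Y hXY
    ext a b
    exact congrFun (congrArg WithLp.ofLp hXY) (b, a)
  have hvind : LinearIndependent ℂ v := hA.map' f hker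
  set K : Submodule ℂ (EuclideanSpace ℂ (Fin N × Fin N)) :=
    Submodule.span ℂ (v '' {i | i ≠ j}) with hK
  set x : EuclideanSpace ℂ (Fin N × Fin N) := v j - (K.orthogonalProjectionOnto (v j) : _) with hx
  have hxK : x ∈ Kᗮ := Submodule.sub_starProjection_mem_orthogonal _
  have hxne : x ≠ 0 := by
    intro h0
    have hvjK : v j ∈ K := by
      rw [sub_eq_zero] at h0
      rw [h0]
      exact (K.orthogonalProjectionOnto (v j)).2
    exact hvind.notMem_span_image (by simp) hvjK
  have hci : ∀ i, i ≠ j → ⟪x, v i⟫_ℂ = 0 := by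
    intro i hij
    have h1 : ⟪v i, x⟫_ℂ = 0 :=
      Submodule.inner_right_of_mem_orthogonal
        (Submodule.subset_span (Set.mem_image_of_mem v hij)) hxK
    rw [← inner_conj_symm, h1, map_zero]
  have hcj : ⟪x, v j⟫_ℂ = (‖x‖ : ℂ) ^ 2 := by
    have hvj : v j = x + (K.orthogonalProjectionOnto (v j) : _) := by
      rw [hx]; abel
    rw [hvj, inner_add_right, inner_self_eq_norm_sq_to_K,
      Submodule.inner_left_of_mem_orthogonal (K.orthogonalProjectionOnto (v j)).2 hxK, add_zero]
    norm_num
  -- entries of Choi matrix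
  have hent : ∀ p q : Fin N × Fin N,
      (Matrix.of fun p q : Fin N × Fin N =>
        Φ (Matrix.of fun a b : Fin N =>
          Matrix.vecMulVec u (star u) (p.1, a) (q.1, b)) p.2 q.2) p q
      = ∑ i, (ε i : ℂ) * (v i p * star (v i q)) := by
    intro p q
    simp only [Matrix.of_apply, hΦ, Matrix.sum_apply, Matrix.smul_apply]
    refine Finset.sum_congr rfl fun i _ => ?_
    rw [Complex.real_smul]
    congr 1
    simp only [Matrix.mul_apply, Matrix.conjTranspose_apply, Matrix.of_apply,
      Matrix.vecMulVec_apply, Pi.star_apply, hu, apply_ite (star : ℂ → ℂ), star_one, star_zero,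
      mul_ite, mul_one, mul_zero, ite_mul, one_mul, zero_mul, Finset.sum_ite_irrel,
      Finset.sum_const_zero, Finset.sum_ite_eq, Finset.mem_univ, if_true]
    rfl
  have hinner : ∀ i, ⟪x, v i⟫_ℂ = ∑ p, star (x p) * v i p := by
    intro i
    rw [PiLp.inner_apply]
    exact Finset.sum_congr rfl fun p _ => by rw [RCLike.inner_apply, starRingEnd_apply, mul_comm]
  have hq := hC.dotProduct_mulVec_nonneg x
  have hquad : dotProduct (star (x : Fin N × Fin N → ℂ))
      ((Matrix.of fun p q : Fin N × Fin N =>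
        Φ (Matrix.of fun a b : Fin N =>
          Matrix.vecMulVec u (star u) (p.1, a) (q.1, b)) p.2 q.2) *ᵥ x)
      = ∑ i, (ε i : ℂ) * (⟪x, v i⟫_ℂ * star ⟪x, v i⟫_ℂ) := by
    have hCmat : (Matrix.of fun p q : Fin N × Fin N =>
        Φ (Matrix.of fun a b : Fin N =>
          Matrix.vecMulVec u (star u) (p.1, a) (q.1, b)) p.2 q.2)
        = ∑ i, (ε i : ℂ) • Matrix.vecMulVec (fun p => v i p) (star fun p => v i p) := by
      ext p q
      rw [hent p q]
      simp only [Matrix.sum_apply, Matrix.smul_apply, Matrix.vecMulVec_apply, smul_eq_mul,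
        Pi.star_apply]
    have hdot : ∀ i, star (x : Fin N × Fin N → ℂ) ⬝ᵥ (fun p => v i p) = ⟪x, v i⟫_ℂ := by
      intro i
      rw [hinner i]
      exact Finset.sum_congr rfl fun p _ => rfl
    rw [hCmat, sum_mulVec', dotProduct_sum']
    refine Finset.sum_congr rfl fun i _ => ?_
    rw [Matrix.smul_mulVec, dotProduct_smul, outer_quad, hdot, smul_eq_mul]
  rw [hquad] at hq
  have hsingle : ∑ i, (ε i : ℂ) * (⟪x, v i⟫_ℂ * star ⟪x, v i⟫_ℂ)
      = (ε j : ℂ) * (⟪x, v j⟫_ℂ * star ⟪x, v j⟫_ℂ) :=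
    Finset.sum_eq_single_of_mem j (Finset.mem_univ j)
      (fun i _ hij => by rw [hci i hij]; ring)
  rw [hsingle, hcj, h] at hq
  have hstar : star ((‖x‖ : ℂ) ^ 2) = (‖x‖ : ℂ) ^ 2 := by
    rw [star_pow, Complex.star_def, Complex.conj_ofReal]
  rw [hstar] at hq
  have hxpos : (0:ℝ) < ‖x‖ := norm_pos_iff.2 hxne
  have hcast : ((-1 : ℝ) : ℂ) * ((‖x‖ : ℂ) ^ 2 * (‖x‖ : ℂ) ^ 2)
      = ((-(‖x‖ ^ 2 * ‖x‖ ^ 2) : ℝ) : ℂ) := by push_cast; ring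
  rw [hcast, Complex.zero_le_real] at hq
  have h2 : (0:ℝ) < ‖x‖ ^ 2 := pow_pos hxpos 2
  nlinarith [mul_pos h2 h2]

theorem stmt_0 (N k : ℕ) (hN : 1 ≤ N) (hk : 1 ≤ k)
    (A : Fin k → Matrix (Fin N) (Fin N) ℂ) (hA : LinearIndependent ℂ A)
    (ε : Fin k → ℝ) (hε : ∀ j, ε j = 1 ∨ ε j = -1)
    (Φ : Matrix (Fin N) (Fin N) ℂ → Matrix (Fin N) (Fin N) ℂ)
    (hΦ : ∀ ρ, Φ ρ = ∑ j, ε j • (A j * ρ * (A j)ᴴ)) :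
    CompletelyPositive Φ ↔ ∀ j, ε j = 1 := by
  exact ⟨pos_of_cp N k hN hk A hA ε hε Φ hΦ,
    fun h1 => cp_of_pos N k hN hk A ε h1 Φ hΦ⟩
end

section
/- Let N ≥ 1 and k ≥ 1. Suppose Φ : Matrix (Fin N) (Fin N) ℂ → Matrix (Fin N) (Fin N) ℂ is completely positive and has the representation Φ(ρ) = ∑_{j=1}^k β_j • (A_j * ρ * A_jᴴ), where A_1, …, A_k are N×N complex matrices forming a linearly independent family and each β_j is a real number. Then β_j ≥ 0 for every j ∈ {1, …, k}. -/
open scoped ComplexOrder Matrix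

theorem stmt_1 (N k : ℕ) (hN : 1 ≤ N) (hk : 1 ≤ k)
    (A : Fin k → Matrix (Fin N) (Fin N) ℂ) (hA : LinearIndependent ℂ A)
    (β : Fin k → ℝ)
    (Φ : Matrix (Fin N) (Fin N) ℂ → Matrix (Fin N) (Fin N) ℂ)
    (hΦ : ∀ ρ, Φ ρ = ∑ j, β j • (A j * ρ * (A j)ᴴ))
    (hCP : CompletelyPositive Φ) :
    ∀ j, 0 ≤ β j := by
  intro j
  -- dual functional separating A j from the others
  have hnot : A j ∉ Submodule.span ℂ (A '' {j}ᶜ) :=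
    hA.notMem_span_image (by simp)
  obtain ⟨f, hfj, hfker⟩ :=
    (Submodule.span ℂ (A '' {j}ᶜ)).exists_dual_map_eq_bot_of_notMem hnot inferInstance
  have hfi : ∀ i, i ≠ j → f (A i) = 0 := by
    intro i hi
    have hmem : A i ∈ Submodule.span ℂ (A '' {j}ᶜ) :=
      Submodule.subset_span ⟨i, by simp [hi], rfl⟩
    have : f (A i) ∈ (Submodule.span ℂ (A '' {j}ᶜ)).map f := ⟨A i, hmem, rfl⟩
    rwa [hfker, Submodule.mem_bot] at this
  -- the maximally entangled state
  set Ω : Fin N × Fin N → ℂ := fun p => if p.1 = p.2 then 1 else 0 with hΩ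
  set M : Matrix (Fin N × Fin N) (Fin N × Fin N) ℂ :=
    Matrix.of fun p q => Ω p * starRingEnd ℂ (Ω q) with hM
  have hMps : M.PosSemidef := by
    refine Matrix.PosSemidef.of_dotProduct_mulVec_nonneg ?_ ?_
    · ext p q
      simp [hM, Matrix.conjTranspose_apply, mul_comm]
    · intro x
      have : star x ⬝ᵥ M *ᵥ x =
          star (∑ q, Ω q * x q) * (∑ q, Ω q * x q) := by
        simp only [dotProduct, Matrix.mulVec, hM, Matrix.of_apply, Pi.star_apply,
          star_sum, star_mul']
        rw [Finset.sum_mul]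
        refine Finset.sum_congr rfl fun p _ => ?_
        rw [Finset.mul_sum, Finset.mul_sum]
        refine Finset.sum_congr rfl fun q _ => ?_
        have h1 : starRingEnd ℂ (Ω p) = Ω p := by
          simp only [hΩ]; split <;> simp
        have h2 : starRingEnd ℂ (Ω q) = Ω q := by
          simp only [hΩ]; split <;> simp
        simp only [RCLike.star_def, h1, h2]
        ring
      rw [this]
      exact star_mul_self_nonneg _
  -- apply complete positivity
  have hC := hCP N hN M hMps
  set C : Matrix (Fin N × Fin N) (Fin N × Fin N) ℂ :=
    Matrix.of fun p q : Fin N × Fin N =>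
      Φ (Matrix.of fun a b : Fin N => M (p.1, a) (q.1, b)) p.2 q.2 with hCdef
  -- the inner blocks are standard basis matrices
  have hblock : ∀ p q : Fin N × Fin N,
      (Matrix.of fun a b : Fin N => M (p.1, a) (q.1, b)) =
        Matrix.single p.1 q.1 (1 : ℂ) := by
    intro p q
    ext a b
    simp only [Matrix.of_apply, hM, hΩ, Matrix.single]
    split_ifs <;> simp_all
  have hentry : ∀ (B : Matrix (Fin N) (Fin N) ℂ) (i j' b d : Fin N),
      (B * Matrix.single i j' (1 : ℂ) * Bᴴ) b d
        = B b i * starRingEnd ℂ (B d j') := by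
    intro B i j' b d
    simp [Matrix.mul_apply, Matrix.single, Matrix.conjTranspose_apply, ite_and,
      Finset.sum_mul, mul_ite, ite_mul, Finset.mul_sum]
  have hCentry : ∀ p q : Fin N × Fin N,
      C p q = ∑ i : Fin k, (β i : ℂ) * (A i p.2 p.1 * starRingEnd ℂ (A i q.2 q.1)) := by
    intro p q
    simp only [hCdef, Matrix.of_apply, hblock, hΦ, Matrix.sum_apply, Matrix.smul_apply]
    refine Finset.sum_congr rfl fun i _ => ?_
    rw [hentry]
    simp [Complex.real_smul]
  -- the test vector
  set v : Fin N × Fin N → ℂ :=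
    fun p => starRingEnd ℂ (f (Matrix.single p.2 p.1 (1 : ℂ))) with hv
  -- key evaluation lemma
  have hsum : ∀ B : Matrix (Fin N) (Fin N) ℂ,
      ∑ p : Fin N × Fin N, f (Matrix.single p.2 p.1 (1 : ℂ)) * B p.2 p.1 = f B := by
    intro B
    rw [Fintype.sum_prod_type]
    conv_rhs => rw [Matrix.matrix_eq_sum_single B, map_sum]
    rw [Finset.sum_comm]
    refine Finset.sum_congr rfl fun b _ => ?_
    rw [map_sum]
    refine Finset.sum_congr rfl fun a _ => ?_
    have : Matrix.single b a (B b a) = B b a • Matrix.single b a (1 : ℂ) := by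
      rw [Matrix.smul_single, smul_eq_mul, mul_one]
    rw [this, map_smul, smul_eq_mul, mul_comm]
  -- main computation
  have swap : ∀ (F : Fin k → (Fin N × Fin N) → (Fin N × Fin N) → ℂ),
      ∑ i, ∑ p, ∑ q, F i p q = ∑ p, ∑ q, ∑ i, F i p q := by
    intro F
    rw [Finset.sum_comm]
    exact Finset.sum_congr rfl fun p _ => Finset.sum_comm
  have key : star v ⬝ᵥ C *ᵥ v =
      ∑ i : Fin k, (β i : ℂ) * (f (A i) * starRingEnd ℂ (f (A i))) := by
    have e1 : star v ⬝ᵥ C *ᵥ v =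
        ∑ p : Fin N × Fin N, ∑ q : Fin N × Fin N, ∑ i : Fin k,
          (β i : ℂ) * ((f (Matrix.single p.2 p.1 (1:ℂ)) * A i p.2 p.1) *
            (starRingEnd ℂ (A i q.2 q.1) * v q)) := by
      rw [dotProduct]
      refine Finset.sum_congr rfl fun p _ => ?_
      rw [Matrix.mulVec, dotProduct, Finset.mul_sum]
      refine Finset.sum_congr rfl fun q _ => ?_
      rw [hCentry, Finset.sum_mul, Finset.mul_sum]
      refine Finset.sum_congr rfl fun i _ => ?_
      have hvp : star (v p) = f (Matrix.single p.2 p.1 (1:ℂ)) := by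
        simp [hv]
      simp only [Pi.star_apply, RCLike.star_def] at hvp ⊢
      rw [hvp]
      ring
    have e2 : ∀ i : Fin k,
        (β i : ℂ) * (f (A i) * starRingEnd ℂ (f (A i))) =
        ∑ p : Fin N × Fin N, ∑ q : Fin N × Fin N,
          (β i : ℂ) * ((f (Matrix.single p.2 p.1 (1:ℂ)) * A i p.2 p.1) *
            (starRingEnd ℂ (A i q.2 q.1) * v q)) := by
      intro i
      have hS2 : (∑ q : Fin N × Fin N, starRingEnd ℂ (A i q.2 q.1) * v q)
          = starRingEnd ℂ (f (A i)) := by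
        rw [← hsum (A i), map_sum]
        refine Finset.sum_congr rfl fun q _ => ?_
        rw [map_mul]
        simp only [hv, Complex.conj_conj, RingHomCompTriple.comp_apply, RingHom.id_apply]
        ring
      rw [← hS2, ← hsum (A i), Finset.sum_mul_sum, Finset.mul_sum]
      refine Finset.sum_congr rfl fun p _ => ?_
      rw [Finset.mul_sum]
    rw [e1, ← swap]
    exact Finset.sum_congr rfl fun i _ => (e2 i).symm
  -- conclude
  have hpos := hC.dotProduct_mulVec_nonneg v
  rw [key, Finset.sum_eq_single j
      (fun i _ hi => by rw [hfi i hi]; ring) (fun h => absurd (Finset.mem_univ j) h)] at hpos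
  rw [Complex.mul_conj] at hpos
  have : ((β j * Complex.normSq (f (A j)) : ℝ) : ℂ) = (β j : ℂ) * (Complex.normSq (f (A j)) : ℂ) := by
    push_cast; ring
  rw [← this] at hpos
  rw [Complex.zero_le_real] at hpos
  have hns : 0 < Complex.normSq (f (A j)) := Complex.normSq_pos.mpr hfj
  exact (mul_nonneg_iff_of_pos_right hns).mp hpos
end

section
/- Let β_0, β_1, β_2, β_3 be real numbers and define Φ : Matrix (Fin 2) (Fin 2) ℂ → Matrix (Fin 2) (Fin 2) ℂ by Φ(ρ) = ∑_{i=0}^3 β_i • (σ_i * ρ * σ_i). Then Φ is positive (i.e., maps positive semidefinite 2×2 matrices to positive semidefinite matrices) if and only if every pair from {β_0, β_1, β_2, β_3} sums to a nonnegative number, i.e., β_0 + β_1 ≥ 0, β_0 + β_2 ≥ 0, β_0 + β_3 ≥ 0, β_1 + β_2 ≥ 0, β_1 + β_3 ≥ 0, and β_2 + β_3 ≥ 0. -/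
open scoped ComplexOrder Matrix

section Aux

private lemma quad_aux (p r u v a b c d : ℝ) (hp : 0 ≤ p) (hr : 0 ≤ r) (h : u^2+v^2 ≤ p*r) :
    0 ≤ p*(a^2+b^2) + r*(c^2+d^2) + 2*(u*(a*c+b*d) - v*(a*d-b*c)) := by
  have hX : 0 ≤ a^2+b^2 := by positivity
  have hY : 0 ≤ c^2+d^2 := by positivity
  have hm : (u*(a*c+b*d) - v*(a*d-b*c))^2 ≤ p*r*((a^2+b^2)*(c^2+d^2)) := by
    nlinarith [sq_nonneg (u*(a*d-b*c)+v*(a*c+b*d)), sq_nonneg (a*c+b*d), sq_nonneg (a*d-b*c)]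
  have hs : 0 ≤ p*(a^2+b^2) + r*(c^2+d^2) := by positivity
  nlinarith [hm, sq_nonneg (p*(a^2+b^2) - r*(c^2+d^2)), hs]

private lemma psd2_of {p r : ℝ} {q : ℂ} (hp : 0 ≤ p) (hr : 0 ≤ r)
    (h : Complex.normSq q ≤ p * r) :
    Matrix.PosSemidef !![(p:ℂ), q; star q, (r:ℂ)] := by
  rw [Matrix.posSemidef_iff_dotProduct_mulVec]
  constructor
  · ext i j
    fin_cases i <;> fin_cases j <;>
      simp [Matrix.conjTranspose_apply, Complex.ext_iff]
  · intro x
    have hx : star x ⬝ᵥ (!![(p:ℂ), q; star q, (r:ℂ)] *ᵥ x) =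
        (starRingEnd ℂ) (x 0) * ((p:ℂ) * x 0 + q * x 1) +
        (starRingEnd ℂ) (x 1) * ((starRingEnd ℂ) q * x 0 + (r:ℂ) * x 1) := by
      simp [dotProduct, Matrix.mulVec, Fin.sum_univ_two, dotProduct]
    rw [hx, Complex.le_def]
    constructor
    · simp only [Complex.add_re, Complex.add_im, Complex.mul_re, Complex.mul_im, Complex.conj_re,
        Complex.conj_im, Complex.ofReal_re, Complex.ofReal_im, Complex.zero_re]
      have := quad_aux p r q.re q.im (x 0).re (x 0).im (x 1).re (x 1).im hp hr
        (by rw [Complex.normSq_apply] at h; nlinarith [h])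
      nlinarith [this]
    · simp only [Complex.add_re, Complex.add_im, Complex.mul_re, Complex.mul_im, Complex.conj_re,
        Complex.conj_im, Complex.ofReal_re, Complex.ofReal_im, Complex.zero_im]
      ring

private lemma psd2_repr {ρ : Matrix (Fin 2) (Fin 2) ℂ} (h : ρ.PosSemidef) :
    ∃ (a d : ℝ) (b : ℂ), ρ = !![(a:ℂ), b; star b, (d:ℂ)] ∧ 0 ≤ a ∧ 0 ≤ d ∧
      Complex.normSq b ≤ a * d := by
  obtain ⟨hherm, hform⟩ := Matrix.posSemidef_iff_dotProduct_mulVec.mp h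
  have h00 := (congrFun (congrFun hherm.symm 0) 0).symm
  have h11 := (congrFun (congrFun hherm.symm 1) 1).symm
  have h10 := (congrFun (congrFun hherm.symm 1) 0).symm
  simp [Matrix.conjTranspose_apply] at h00 h11 h10
  set a := (ρ 0 0).re with ha'
  set d := (ρ 1 1).re with hd'
  set b := ρ 0 1 with hb'
  have hρ : ρ = !![(a:ℂ), b; star b, (d:ℂ)] := by
    ext i j
    fin_cases i <;> fin_cases j <;> simp
    · exact (Complex.conj_eq_iff_re.mp h00).symm
    · exact hb'
    · exact h10.symm
    · exact (Complex.conj_eq_iff_re.mp h11).symm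
  rw [hρ] at hform
  set k := Complex.normSq b with hk'
  have hk : 0 ≤ k := Complex.normSq_nonneg b
  have hA : 0 ≤ a := by
    have := hform ![1, 0]
    have e : star ![(1:ℂ), 0] ⬝ᵥ (!![(a:ℂ), b; star b, (d:ℂ)] *ᵥ ![(1:ℂ), 0]) = ((a:ℝ):ℂ) := by
      simp [dotProduct, Matrix.mulVec, Fin.sum_univ_two]
    rw [e, Complex.le_def] at this
    simpa only [Complex.ofReal_re, Complex.zero_re] using this.1
  have hD : 0 ≤ d := by
    have := hform ![0, 1]
    have e : star ![(0:ℂ), 1] ⬝ᵥ (!![(a:ℂ), b; star b, (d:ℂ)] *ᵥ ![(0:ℂ), 1]) = ((d:ℝ):ℂ) := by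
      simp [dotProduct, Matrix.mulVec, Fin.sum_univ_two]
    rw [e, Complex.le_def] at this
    simpa only [Complex.ofReal_re, Complex.zero_re] using this.1
  have key : ∀ t s : ℝ, 0 ≤ a*k*t^2 + 2*k*t*s + d*s^2 := by
    intro t s
    have := hform ![b * (t:ℂ), (s:ℂ)]
    have e : star ![b * (t:ℂ), (s:ℂ)] ⬝ᵥ (!![(a:ℂ), b; star b, (d:ℂ)] *ᵥ ![b * (t:ℂ), (s:ℂ)])
        = ((a*k*t^2 + 2*k*t*s + d*s^2 : ℝ) : ℂ) := by
      simp [dotProduct, Matrix.mulVec, Fin.sum_univ_two, hk',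
        Complex.normSq_eq_conj_mul_self]
      ring
    rw [e, Complex.le_def] at this
    simpa only [Complex.ofReal_re, Complex.zero_re] using this.1
  refine ⟨a, d, b, hρ, hA, hD, ?_⟩
  by_contra hc
  push_neg at hc
  have h1 : 0 ≤ a * (a*d - k) := by nlinarith [key 1 (-a)]
  have ha0 : a = 0 := by nlinarith
  have hkpos : 0 < k := by nlinarith
  have h2' : 0 ≤ d * k * (a * d - k) := by nlinarith [key d (-k)]
  have hd0 : d ≤ 0 := by
    nlinarith [h2', mul_nonneg hk (sq_nonneg d), mul_pos hkpos hkpos, ha0.le, ha0.ge,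
      mul_nonneg (mul_nonneg hD hk) (mul_nonneg hA hD)]
  nlinarith [key 1 (-1), ha0.le, ha0.ge, hk]

private lemma psd2_facts {M : Matrix (Fin 2) (Fin 2) ℂ} (h : M.PosSemidef) :
    0 ≤ (M 0 0).re ∧ 0 ≤ (M 1 1).re ∧
      Complex.normSq (M 0 1) ≤ (M 0 0).re * (M 1 1).re := by
  obtain ⟨a, d, b, hM, ha, hd, hb⟩ := psd2_repr h
  rw [hM]
  simpa using ⟨ha, hd, hb⟩

end Aux

/-- The Pauli matrices `σ_0, σ_1, σ_2, σ_3`. -/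
def pauli : Fin 4 → Matrix (Fin 2) (Fin 2) ℂ :=
  ![!![1, 0; 0, 1], !![0, 1; 1, 0], !![0, -Complex.I; Complex.I, 0], !![1, 0; 0, -1]]

private lemma Phi_eq (β : Fin 4 → ℝ) (ρ : Matrix (Fin 2) (Fin 2) ℂ) :
    (∑ i, β i • (pauli i * ρ * pauli i)) =
      !![((β 0 + β 3 : ℝ):ℂ) * ρ 0 0 + ((β 1 + β 2 : ℝ):ℂ) * ρ 1 1,
         ((β 0 - β 3 : ℝ):ℂ) * ρ 0 1 + ((β 1 - β 2 : ℝ):ℂ) * ρ 1 0;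
         ((β 0 - β 3 : ℝ):ℂ) * ρ 1 0 + ((β 1 - β 2 : ℝ):ℂ) * ρ 0 1,
         ((β 1 + β 2 : ℝ):ℂ) * ρ 0 0 + ((β 0 + β 3 : ℝ):ℂ) * ρ 1 1] := by
  ext i j
  fin_cases i <;> fin_cases j <;>
    simp [pauli, Fin.sum_univ_four, Matrix.mul_apply, Matrix.vecMul, dotProduct,
      Fin.sum_univ_two, Matrix.smul_apply, Complex.real_smul] <;>
    ring_nf <;> simp [Complex.I_sq] <;> ring_nf

private lemma key2 (β0 β1 β2 β3 a d u v : ℝ)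
    (h01 : 0 ≤ β0 + β1) (h02 : 0 ≤ β0 + β2) (h03 : 0 ≤ β0 + β3)
    (h12 : 0 ≤ β1 + β2) (h13 : 0 ≤ β1 + β3) (h23 : 0 ≤ β2 + β3)
    (ha : 0 ≤ a) (hd : 0 ≤ d) (hb : u^2 + v^2 ≤ a*d) :
    ((β0 - β3 + (β1 - β2))*u)^2 + ((β0 - β3 - (β1 - β2))*v)^2 ≤
      ((β0 + β3)*a + (β1 + β2)*d) * ((β1 + β2)*a + (β0 + β3)*d) := by
  nlinarith [mul_nonneg (mul_nonneg h01 h23) (sq_nonneg u),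
    mul_nonneg (mul_nonneg h02 h13) (sq_nonneg v),
    mul_nonneg (mul_nonneg h03 h12) (sq_nonneg (a-d)),
    mul_nonneg (sq_nonneg (β0+β1+β2+β3)) (sub_nonneg.2 hb)]

theorem stmt_2 (β : Fin 4 → ℝ)
    (Φ : Matrix (Fin 2) (Fin 2) ℂ → Matrix (Fin 2) (Fin 2) ℂ)
    (hΦ : ∀ ρ, Φ ρ = ∑ i, β i • (pauli i * ρ * pauli i)) :
    (∀ ρ : Matrix (Fin 2) (Fin 2) ℂ, ρ.PosSemidef → (Φ ρ).PosSemidef) ↔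
      (0 ≤ β 0 + β 1 ∧ 0 ≤ β 0 + β 2 ∧ 0 ≤ β 0 + β 3 ∧
       0 ≤ β 1 + β 2 ∧ 0 ≤ β 1 + β 3 ∧ 0 ≤ β 2 + β 3) := by
  constructor
  · intro h
    -- ρ1 = !![1,0;0,0]
    have hpsd1 : (!![1, 0; 0, 0] : Matrix (Fin 2) (Fin 2) ℂ).PosSemidef := by
      have := psd2_of (p := 1) (r := 0) (q := 0) (by norm_num) le_rfl (by simp)
      simpa using this
    have F1 := psd2_facts (h _ hpsd1)
    rw [hΦ, Phi_eq] at F1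
    simp at F1
    -- ρ2 = !![1,1;1,1]
    have hpsd2 : (!![1, 1; 1, 1] : Matrix (Fin 2) (Fin 2) ℂ).PosSemidef := by
      have := psd2_of (p := 1) (r := 1) (q := 1) (by norm_num) (by norm_num) (by simp)
      simpa using this
    have F2 := psd2_facts (h _ hpsd2)
    rw [hΦ, Phi_eq] at F2
    simp [Complex.normSq_apply] at F2
    -- ρ3 = !![1,-I;I,1]
    have hpsd3 : (!![1, -Complex.I; Complex.I, 1] : Matrix (Fin 2) (Fin 2) ℂ).PosSemidef := by
      have := psd2_of (p := 1) (r := 1) (q := -Complex.I) (by norm_num) (by norm_num) (by simp)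
      simpa using this
    have F3 := psd2_facts (h _ hpsd3)
    rw [hΦ, Phi_eq] at F3
    simp [Complex.normSq_apply] at F3
    obtain ⟨g1, g2, -⟩ := F1
    obtain ⟨g3, -, g4⟩ := F2
    obtain ⟨g5, -, g6⟩ := F3
    refine ⟨by nlinarith, by nlinarith, by linarith, by linarith, by nlinarith, by nlinarith⟩
  · rintro ⟨h01, h02, h03, h12, h13, h23⟩ ρ hρ
    obtain ⟨a, d, b, hrep, ha, hd, hb⟩ := psd2_repr hρ
    rw [hΦ, Phi_eq, hrep]
    have e : (!![((β 0 + β 3 : ℝ):ℂ) * (!![(a:ℂ), b; star b, (d:ℂ)] 0 0) +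
          ((β 1 + β 2 : ℝ):ℂ) * (!![(a:ℂ), b; star b, (d:ℂ)] 1 1),
        ((β 0 - β 3 : ℝ):ℂ) * (!![(a:ℂ), b; star b, (d:ℂ)] 0 1) +
          ((β 1 - β 2 : ℝ):ℂ) * (!![(a:ℂ), b; star b, (d:ℂ)] 1 0);
        ((β 0 - β 3 : ℝ):ℂ) * (!![(a:ℂ), b; star b, (d:ℂ)] 1 0) +
          ((β 1 - β 2 : ℝ):ℂ) * (!![(a:ℂ), b; star b, (d:ℂ)] 0 1),
        ((β 1 + β 2 : ℝ):ℂ) * (!![(a:ℂ), b; star b, (d:ℂ)] 0 0) +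
          ((β 0 + β 3 : ℝ):ℂ) * (!![(a:ℂ), b; star b, (d:ℂ)] 1 1)] : Matrix (Fin 2) (Fin 2) ℂ)
        = !![(((β 0 + β 3)*a + (β 1 + β 2)*d : ℝ):ℂ),
             ((β 0 - β 3 : ℝ):ℂ) * b + ((β 1 - β 2 : ℝ):ℂ) * star b;
             star (((β 0 - β 3 : ℝ):ℂ) * b + ((β 1 - β 2 : ℝ):ℂ) * star b),
             (((β 1 + β 2)*a + (β 0 + β 3)*d : ℝ):ℂ)] := by
      ext i j
      fin_cases i <;> fin_cases j <;> simp <;> push_cast <;> ring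
    rw [e]
    apply psd2_of
    · have := add_nonneg (mul_nonneg h03 ha) (mul_nonneg h12 hd); linarith
    · have := add_nonneg (mul_nonneg h12 ha) (mul_nonneg h03 hd); linarith
    · have hb' : b.re^2 + b.im^2 ≤ a * d := by
        rw [Complex.normSq_apply] at hb; nlinarith [hb]
      have := key2 (β 0) (β 1) (β 2) (β 3) a d b.re b.im h01 h02 h03 h12 h13 h23 ha hd hb'
      rw [Complex.normSq_apply]
      simp only [Complex.add_re, Complex.add_im, Complex.mul_re, Complex.mul_im,
        Complex.ofReal_re, Complex.ofReal_im, Complex.conj_re, Complex.conj_im,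
        RCLike.star_def]
      nlinarith [this]
end

section
/- Let M be a 3×3 matrix with real entries. Then there exist 3×3 real matrices A and B with AᵀA = 1, det A = 1, BᵀB = 1, det B = 1, and a function d : Fin 3 → ℝ, such that M = B * Matrix.diagonal d * A, and such that: if det M ≥ 0 then d₀ ≥ d₁ ≥ d₂ ≥ 0 and d₀, d₁, d₂ are the singular values of M (i.e., d_i² are the eigenvalues of MᵀM); while if det M < 0 then 0 ≥ d₀ ≥ d₁ ≥ d₂ and −d₀, −d₁, −d₂ are the singular values of M listed in increasing order. -/
open scoped Matrix
open Polynomial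

lemma my_charmatrix_diagonal {n : Type*} [Fintype n] [DecidableEq n] {R : Type*} [CommRing R]
    (d : n → R) : Matrix.charmatrix (Matrix.diagonal d) = Matrix.diagonal fun i => X - C (d i) := by
  ext i j
  by_cases h : i = j
  · subst h; simp [Matrix.charmatrix_apply_eq]
  · simp [Matrix.charmatrix_apply_ne _ _ _ h, Matrix.diagonal_apply_ne _ h]

lemma my_charpoly_diagonal {n : Type*} [Fintype n] [DecidableEq n] {R : Type*} [CommRing R]
    (d : n → R) : (Matrix.diagonal d).charpoly = ∏ i, (X - C (d i)) := by
  rw [Matrix.charpoly, my_charmatrix_diagonal, Matrix.det_diagonal]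

lemma my_charpoly_conj {n : Type*} [Fintype n] [DecidableEq n] {R : Type*} [CommRing R]
    (P A : Matrix n n R) (h1 : Pᵀ * P = 1) (h2 : P * Pᵀ = 1) :
    (Pᵀ * A * P).charpoly = A.charpoly := by
  have key : Matrix.charmatrix (Pᵀ * A * P)
      = (P.map C)ᵀ * Matrix.charmatrix A * (P.map C) := by
    have hch : ∀ (B : Matrix n n R), Matrix.charmatrix B
        = Matrix.diagonal (fun _ => (X : R[X])) - B.map C := by
      intro B; ext i j; rw [Matrix.charmatrix_apply]
      simp [Matrix.sub_apply, Matrix.map_apply]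
    rw [hch, hch]
    rw [show ((Pᵀ * A * P).map (C : R →+* R[X]) : Matrix n n R[X]) = (Pᵀ*A*P).map C from rfl]
    have hmap : ((Pᵀ * A * P).map C : Matrix n n R[X])
        = (P.map C)ᵀ * A.map C * P.map C := by
      rw [← Matrix.transpose_map, ← Matrix.map_mul, ← Matrix.map_mul]
    have hPP : (P.map C)ᵀ * (P.map C) = 1 := by
      rw [← Matrix.transpose_map, ← Matrix.map_mul, h1, Matrix.map_one _ (map_zero C) (map_one C)]
    have hdiag : ∀ (Q : Matrix n n R[X]), Matrix.diagonal (fun _ => (X : R[X])) * Q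
        = Q * Matrix.diagonal (fun _ => (X : R[X])) := by
      intro Q; ext i j
      rw [Matrix.diagonal_mul, Matrix.mul_diagonal, mul_comm]
    have h3 : (P.map C)ᵀ * Matrix.diagonal (fun _ => (X : R[X])) * (P.map C)
        = Matrix.diagonal (fun _ => (X : R[X])) := by
      rw [Matrix.mul_assoc, hdiag, ← Matrix.mul_assoc, hPP, Matrix.one_mul]
    rw [hmap, Matrix.mul_sub, Matrix.sub_mul, h3]
  rw [Matrix.charpoly, Matrix.charpoly, key, Matrix.det_mul, Matrix.det_mul,
    mul_comm, ← mul_assoc, ← Matrix.det_mul, ← Matrix.transpose_map, ← Matrix.map_mul, h2,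
    Matrix.map_one _ (map_zero C) (map_one C), Matrix.det_one, one_mul]

lemma my_charpoly_svd (M B A : Matrix (Fin 3) (Fin 3) ℝ) (d : Fin 3 → ℝ)
    (hA : Aᵀ * A = 1) (hB : Bᵀ * B = 1) (hM : M = B * Matrix.diagonal d * A) :
    (Mᵀ * M).charpoly = ∏ i : Fin 3, (X - C (d i ^ 2)) := by
  have hA' : A * Aᵀ = 1 := mul_eq_one_comm.mp hA
  have key : Mᵀ * M = Aᵀ * Matrix.diagonal (fun i => d i ^ 2) * A := by
    rw [hM, Matrix.transpose_mul, Matrix.transpose_mul, Matrix.diagonal_transpose]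
    calc Aᵀ * (Matrix.diagonal d * Bᵀ) * (B * Matrix.diagonal d * A)
        = Aᵀ * Matrix.diagonal d * (Bᵀ * B) * Matrix.diagonal d * A := by
          simp only [Matrix.mul_assoc]
      _ = Aᵀ * (Matrix.diagonal d * Matrix.diagonal d) * A := by
          rw [hB, Matrix.mul_one]; simp only [Matrix.mul_assoc]
      _ = Aᵀ * Matrix.diagonal (fun i => d i ^ 2) * A := by
          rw [Matrix.diagonal_mul_diagonal]
          congr 1; congr 1; funext i; ring
  rw [key, my_charpoly_conj A _ hA hA', my_charpoly_diagonal]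

lemma my_fix_sign (M A B : Matrix (Fin 3) (Fin 3) ℝ) (d : Fin 3 → ℝ)
    (hA : Aᵀ * A = 1) (hB : Bᵀ * B = 1) (hM : M = B * Matrix.diagonal d * A)
    (hprod : A.det * B.det = 1) :
    ∃ A' B' : Matrix (Fin 3) (Fin 3) ℝ, A'ᵀ * A' = 1 ∧ A'.det = 1 ∧ B'ᵀ * B' = 1 ∧ B'.det = 1 ∧
      M = B' * Matrix.diagonal d * A' := by
  have hA2 : A.det * A.det = 1 := by
    have := congrArg Matrix.det hA
    rwa [Matrix.det_mul, Matrix.det_transpose, Matrix.det_one] at this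
  rcases mul_self_eq_one_iff.mp hA2 with h1 | h1
  · refine ⟨A, B, hA, h1, hB, ?_, hM⟩
    rw [h1, one_mul] at hprod; exact hprod
  · refine ⟨-A, -B, by simp [hA], ?_, by simp [hB], ?_, ?_⟩
    · simp [Matrix.det_neg, h1]; norm_num
    · have hb : B.det = -1 := by rw [h1] at hprod; linarith
      simp [Matrix.det_neg, hb]; norm_num
    · rw [hM]; simp [Matrix.mul_neg, Matrix.neg_mul]

lemma my_core (M : Matrix (Fin 3) (Fin 3) ℝ) :
    ∃ (A B : Matrix (Fin 3) (Fin 3) ℝ) (σ : Fin 3 → ℝ),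
      Aᵀ * A = 1 ∧ Bᵀ * B = 1 ∧ M = B * Matrix.diagonal σ * A ∧
      (∀ i, 0 ≤ σ i) ∧ σ 1 ≤ σ 0 ∧ σ 2 ≤ σ 1 := by
  have hPSD : (Mᵀ * M).PosSemidef := by
    have := Matrix.posSemidef_conjTranspose_mul_self M
    rwa [Matrix.conjTranspose_eq_transpose_of_trivial] at this
  have hH : (Mᵀ * M).IsHermitian := hPSD.1
  set U : Matrix (Fin 3) (Fin 3) ℝ := (hH.eigenvectorUnitary : Matrix (Fin 3) (Fin 3) ℝ) with hUdef
  have hU1 : Uᵀ * U = 1 := by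
    have := (Matrix.mem_unitaryGroup_iff'.mp hH.eigenvectorUnitary.2)
    rwa [Matrix.star_eq_conjTranspose, Matrix.conjTranspose_eq_transpose_of_trivial] at this
  have hU2 : U * Uᵀ = 1 := mul_eq_one_comm.mp hU1
  have hspec : Mᵀ * M = U * Matrix.diagonal hH.eigenvalues * Uᵀ := by
    have := hH.spectral_theorem
    rwa [Unitary.conjStarAlgAut_apply, Matrix.star_eq_conjTranspose, Matrix.conjTranspose_eq_transpose_of_trivial,
      RCLike.ofReal_real_eq_id, Function.id_comp] at this
  -- sort eigenvalues in decreasing order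
  set e : Equiv.Perm (Fin 3) := (Fin.revPerm).trans (Tuple.sort hH.eigenvalues) with hedef
  set μ : Fin 3 → ℝ := fun i => hH.eigenvalues (e i) with hμdef
  have hμanti : ∀ i j : Fin 3, i ≤ j → μ j ≤ μ i := by
    intro i j hij
    have := Tuple.monotone_sort hH.eigenvalues (Fin.rev_le_rev.mpr hij)
    simpa [hμdef, hedef] using this
  have hμnonneg : ∀ i, 0 ≤ μ i := fun i => hPSD.eigenvalues_nonneg (e i)
  set V : Matrix (Fin 3) (Fin 3) ℝ := U.submatrix id e with hVdef
  have hV1 : Vᵀ * V = 1 := by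
    ext i j
    rw [Matrix.mul_apply]
    simp only [hVdef, Matrix.transpose_apply, Matrix.submatrix_apply, id_eq]
    have h := congrFun (congrFun hU1 (e i)) (e j)
    rw [Matrix.mul_apply] at h
    simp only [Matrix.transpose_apply] at h
    rw [h, Matrix.one_apply, Matrix.one_apply]
    simp [e.injective.eq_iff]
  have hV2 : V * Vᵀ = 1 := mul_eq_one_comm.mp hV1
  have hspecV : Mᵀ * M = V * Matrix.diagonal μ * Vᵀ := by
    rw [hspec]
    ext i j
    rw [Matrix.mul_apply, Matrix.mul_apply]
    simp only [Matrix.transpose_apply, Matrix.mul_diagonal, Matrix.submatrix_apply, id_eq]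
    exact (Fintype.sum_equiv e _ _ (fun k => rfl)).symm
  set σ : Fin 3 → ℝ := fun i => Real.sqrt (μ i) with hσdef
  have hσnonneg : ∀ i, 0 ≤ σ i := fun i => Real.sqrt_nonneg _
  have hσsq : ∀ i, σ i ^ 2 = μ i := fun i => Real.sq_sqrt (hμnonneg i)
  set N : Matrix (Fin 3) (Fin 3) ℝ := M * V with hNdef
  have hN : Nᵀ * N = Matrix.diagonal μ := by
    rw [hNdef, Matrix.transpose_mul]
    calc Vᵀ * Mᵀ * (M * V) = Vᵀ * (Mᵀ * M) * V := by simp only [Matrix.mul_assoc]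
      _ = Vᵀ * (V * Matrix.diagonal μ * Vᵀ) * V := by rw [hspecV]
      _ = (Vᵀ * V) * Matrix.diagonal μ * (Vᵀ * V) := by simp only [Matrix.mul_assoc]
      _ = Matrix.diagonal μ := by rw [hV1, Matrix.one_mul, Matrix.mul_one]
  have hNN : ∀ i j, (∑ r, N r i * N r j) = Matrix.diagonal μ i j := by
    intro i j
    have h := congrFun (congrFun hN i) j
    rw [Matrix.mul_apply] at h
    simpa [Matrix.transpose_apply] using h
  have hNcol0 : ∀ i, σ i = 0 → ∀ r, N r i = 0 := by
    intro i hi r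
    have hμ0 : μ i = 0 := by
      have := hσsq i; rw [hi] at this; simpa using this.symm
    have hsum : (∑ r, N r i * N r i) = 0 := by rw [hNN, Matrix.diagonal_apply_eq, hμ0]
    have h0 : ∀ r ∈ Finset.univ, (0:ℝ) ≤ N r i * N r i := fun r _ => mul_self_nonneg _
    have := (Finset.sum_eq_zero_iff_of_nonneg h0).mp hsum r (Finset.mem_univ r)
    exact mul_self_eq_zero.mp this
  -- build orthonormal family from normalized columns of N
  set w : Fin 3 → EuclideanSpace ℝ (Fin 3) :=
    fun i => (σ i)⁻¹ • ((WithLp.equiv 2 (Fin 3 → ℝ)).symm (fun r => N r i)) with hwdef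
  have hwr : ∀ i r, w i r = (σ i)⁻¹ * N r i := by
    intro i r
    simp [hwdef]
  have hinner : ∀ x y : EuclideanSpace ℝ (Fin 3), (inner ℝ x y : ℝ) = ∑ r, x r * y r := by
    intro x y
    rw [PiLp.inner_apply]
    simp [RCLike.inner_apply, mul_comm]
  have horth : Orthonormal ℝ (Set.restrict {i | σ i ≠ 0} w) := by
    rw [orthonormal_iff_ite]
    rintro ⟨i, hi⟩ ⟨j, hj⟩
    show inner ℝ (w i) (w j) = _
    rw [hinner]
    have : (∑ r, w i r * w j r) = (σ i)⁻¹ * (σ j)⁻¹ * ∑ r, N r i * N r j := by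
      rw [Finset.mul_sum]
      refine Finset.sum_congr rfl fun r _ => ?_
      rw [hwr, hwr]; ring
    rw [this, hNN]
    by_cases hij : i = j
    · subst hij
      rw [Matrix.diagonal_apply_eq, ← hσsq i, if_pos rfl]
      have hi' : σ i ≠ 0 := hi
      field_simp
    · rw [Matrix.diagonal_apply_ne _ hij]
      simp [Subtype.mk.injEq, hij]
  obtain ⟨b, hb⟩ := horth.exists_orthonormalBasis_extension_of_card_eq (by simp)
  set B : Matrix (Fin 3) (Fin 3) ℝ := Matrix.of fun r i => b i r with hBdef
  have hB1 : Bᵀ * B = 1 := by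
    ext i j
    rw [Matrix.mul_apply, Matrix.one_apply]
    have h := orthonormal_iff_ite.mp b.orthonormal i j
    rw [hinner] at h
    simpa [hBdef, Matrix.transpose_apply] using h
  have hBD : B * Matrix.diagonal σ = N := by
    ext r i
    rw [Matrix.mul_diagonal]
    by_cases hi : σ i = 0
    · rw [hi, mul_zero, hNcol0 i hi r]
    · have hbi : b i = w i := hb i hi
      have : B r i = (σ i)⁻¹ * N r i := by
        rw [hBdef]
        show (b i) r = _
        rw [hbi, hwr]
      rw [this]
      field_simp
  refine ⟨Vᵀ, B, σ, ?_, hB1, ?_, hσnonneg, ?_, ?_⟩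
  · rw [Matrix.transpose_transpose]; exact hV2
  · calc M = M * (V * Vᵀ) := by rw [hV2, Matrix.mul_one]
      _ = (M * V) * Vᵀ := by rw [Matrix.mul_assoc]
      _ = B * Matrix.diagonal σ * Vᵀ := by rw [hBD, hNdef]
  · exact Real.sqrt_le_sqrt (hμanti 0 1 (by decide))
  · exact Real.sqrt_le_sqrt (hμanti 1 2 (by decide))

lemma my_triple_apply (B A : Matrix (Fin 3) (Fin 3) ℝ) (σ : Fin 3 → ℝ) (i j : Fin 3) :
    (B * Matrix.diagonal σ * A) i j = ∑ k, B i k * σ k * A k j := by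
  rw [Matrix.mul_apply]
  simp only [Matrix.mul_diagonal]

theorem stmt_3 (M : Matrix (Fin 3) (Fin 3) ℝ) :
    ∃ (A B : Matrix (Fin 3) (Fin 3) ℝ) (d : Fin 3 → ℝ),
      Aᵀ * A = 1 ∧ A.det = 1 ∧ Bᵀ * B = 1 ∧ B.det = 1 ∧
      M = B * Matrix.diagonal d * A ∧
      -- the |d i| are the singular values of M: the eigenvalues of MᵀM, counted with
      -- multiplicity, are the (d i)²
      (Mᵀ * M).charpoly = ∏ i : Fin 3, (X - C (d i ^ 2)) ∧
      -- if det M ≥ 0, then d₀ ≥ d₁ ≥ d₂ ≥ 0 are the singular values in decreasing order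
      (0 ≤ M.det → 0 ≤ d 2 ∧ d 1 ≤ d 0 ∧ d 2 ≤ d 1) ∧
      -- if det M < 0, then 0 ≥ d₀ ≥ d₁ ≥ d₂, so that −d₀ ≤ −d₁ ≤ −d₂ are the singular
      -- values in increasing order
      (M.det < 0 → d 0 ≤ 0 ∧ d 1 ≤ d 0 ∧ d 2 ≤ d 1) := by
  obtain ⟨A, B, σ, hA, hB, hM, hσ0, h10, h21⟩ := my_core M
  have hdetA2 : A.det * A.det = 1 := by
    have := congrArg Matrix.det hA
    rwa [Matrix.det_mul, Matrix.det_transpose, Matrix.det_one] at this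
  have hdetB2 : B.det * B.det = 1 := by
    have := congrArg Matrix.det hB
    rwa [Matrix.det_mul, Matrix.det_transpose, Matrix.det_one] at this
  have hdetM : M.det = (A.det * B.det) * ∏ i, σ i := by
    rw [hM, Matrix.det_mul, Matrix.det_mul, Matrix.det_diagonal]; ring
  have hab2 : (A.det * B.det) * (A.det * B.det) = 1 := by
    calc (A.det * B.det) * (A.det * B.det) = (A.det * A.det) * (B.det * B.det) := by ring
      _ = 1 := by rw [hdetA2, hdetB2, one_mul]
  rcases le_or_gt 0 M.det with hpos | hneg
  · -- nonnegative determinant case, d := σ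
    have key : ∃ B' : Matrix (Fin 3) (Fin 3) ℝ, B'ᵀ * B' = 1 ∧
        M = B' * Matrix.diagonal σ * A ∧ A.det * B'.det = 1 := by
      rcases mul_self_eq_one_iff.mp hab2 with h1 | h1
      · exact ⟨B, hB, hM, h1⟩
      · -- product of σ is zero, so σ 2 = 0
        have hprod0 : ∏ i, σ i = 0 := by
          rw [h1] at hdetM
          have h2 : (0:ℝ) ≤ ∏ i, σ i := Finset.prod_nonneg fun i _ => hσ0 i
          nlinarith
        have hσ2 : σ 2 = 0 := by
          have := hprod0
          rw [Fin.prod_univ_three] at this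
          rcases mul_eq_zero.mp this with h | h
          · rcases mul_eq_zero.mp h with h' | h'
            · have := hσ0 2; nlinarith [h21, h10]
            · have := hσ0 2; nlinarith [h21]
          · exact h
        set g : Fin 3 → ℝ := fun i => if i = 2 then -1 else 1 with hgdef
        set E : Matrix (Fin 3) (Fin 3) ℝ := Matrix.diagonal g with hEdef
        have hEE : E * E = 1 := by
          rw [hEdef, Matrix.diagonal_mul_diagonal]
          have hgg : (fun i => g i * g i) = fun _ => (1:ℝ) := by
            funext i; by_cases h : i = 2 <;> simp [hgdef, h]
          rw [hgg, Matrix.diagonal_one]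
        have hEdiag : E * Matrix.diagonal σ = Matrix.diagonal σ := by
          rw [hEdef, Matrix.diagonal_mul_diagonal]
          have hgg : (fun i => g i * σ i) = σ := by
            funext i
            by_cases h : i = 2
            · subst h; simp [hgdef, hσ2]
            · simp [hgdef, h]
          rw [hgg]
        have hdetE : E.det = -1 := by
          have e0 : g 0 = 1 := by rw [hgdef]; exact if_neg (by decide)
          have e1 : g 1 = 1 := by rw [hgdef]; exact if_neg (by decide)
          have e2 : g 2 = -1 := by rw [hgdef]; exact if_pos rfl
          rw [hEdef, Matrix.det_diagonal, Fin.prod_univ_three, e0, e1, e2]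
          norm_num
        refine ⟨B * E, ?_, ?_, ?_⟩
        · rw [Matrix.transpose_mul, hEdef, Matrix.diagonal_transpose, ← hEdef]
          calc E * Bᵀ * (B * E) = E * (Bᵀ * B) * E := by simp only [Matrix.mul_assoc]
            _ = E * E := by rw [hB, Matrix.mul_one]
            _ = 1 := hEE
        · rw [hM, Matrix.mul_assoc B E, hEdiag, Matrix.mul_assoc]
        · rw [Matrix.det_mul, hdetE]
          nlinarith [h1]
    obtain ⟨B', hB', hM', hprod'⟩ := key
    obtain ⟨A'', B'', hA'', hdA'', hB'', hdB'', hM''⟩ := my_fix_sign M A B' σ hA hB' hM' hprod'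
    exact ⟨A'', B'', σ, hA'', hdA'', hB'', hdB'', hM'',
      my_charpoly_svd M B'' A'' σ hA'' hB'' hM'',
      fun _ => ⟨hσ0 2, h10, h21⟩,
      fun h => absurd hpos (not_le.mpr h)⟩
  · -- negative determinant case
    have hprodne : ∏ i, σ i ≠ 0 := by
      intro h0
      rw [h0, mul_zero] at hdetM
      exact ne_of_lt hneg hdetM
    have hprodpos : 0 < ∏ i, σ i :=
      lt_of_le_of_ne (Finset.prod_nonneg fun i _ => hσ0 i) (Ne.symm hprodne)
    have hab : A.det * B.det = -1 := by
      rcases mul_self_eq_one_iff.mp hab2 with h1 | h1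
      · rw [h1, one_mul] at hdetM; nlinarith
      · exact h1
    set r : Equiv.Perm (Fin 3) := Equiv.swap 0 2 with hrdef
    have hr0 : r 0 = 2 := Equiv.swap_apply_left 0 2
    have hr1 : r 1 = 1 := Equiv.swap_apply_of_ne_of_ne (by decide) (by decide)
    have hr2 : r 2 = 0 := Equiv.swap_apply_right 0 2
    set d : Fin 3 → ℝ := fun i => -σ (r i) with hddef
    set A' : Matrix (Fin 3) (Fin 3) ℝ := A.submatrix r id with hA'def
    set B' : Matrix (Fin 3) (Fin 3) ℝ := -(B.submatrix id r) with hB'def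
    have hA'1 : A'ᵀ * A' = 1 := by
      ext i j
      rw [Matrix.mul_apply]
      simp only [hA'def, Matrix.transpose_apply, Matrix.submatrix_apply, id_eq]
      have h := congrFun (congrFun hA i) j
      rw [Matrix.mul_apply] at h
      simp only [Matrix.transpose_apply] at h
      rw [← h]
      exact Fintype.sum_equiv r _ _ fun k => rfl
    have hB'1 : B'ᵀ * B' = 1 := by
      ext i j
      rw [Matrix.mul_apply]
      simp only [hB'def, Matrix.transpose_apply, Matrix.neg_apply, Matrix.submatrix_apply, id_eq,
        neg_mul_neg]
      have h := congrFun (congrFun hB (r i)) (r j)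
      rw [Matrix.mul_apply] at h
      simp only [Matrix.transpose_apply] at h
      rw [h, Matrix.one_apply, Matrix.one_apply]
      simp [r.injective.eq_iff]
    have hM' : M = B' * Matrix.diagonal d * A' := by
      rw [hM]
      ext i j
      rw [my_triple_apply, my_triple_apply]
      simp only [hB'def, hA'def, hddef, Matrix.neg_apply, Matrix.submatrix_apply, id_eq,
        neg_mul_neg, neg_mul, neg_neg]
      exact (Fintype.sum_equiv r _ _ fun k => by ring).symm
    have hdetA' : A'.det = -A.det := by
      rw [hA'def]
      rw [Matrix.det_permute]
      rw [hrdef, Equiv.Perm.sign_swap (by decide)]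
      simp
    have hdetB' : B'.det = B.det := by
      rw [hB'def, Matrix.det_neg, Matrix.det_permute']
      rw [hrdef, Equiv.Perm.sign_swap (by decide)]
      norm_num
    have hprod' : A'.det * B'.det = 1 := by
      rw [hdetA', hdetB']; nlinarith
    obtain ⟨A'', B'', hA'', hdA'', hB'', hdB'', hM''⟩ :=
      my_fix_sign M A' B' d hA'1 hB'1 hM' hprod'
    have hd0 : d 0 = -σ 2 := by rw [hddef]; simp [hr0]
    have hd1 : d 1 = -σ 1 := by rw [hddef]; simp [hr1]
    have hd2 : d 2 = -σ 0 := by rw [hddef]; simp [hr2]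
    exact ⟨A'', B'', d, hA'', hdA'', hB'', hdB'', hM'',
      my_charpoly_svd M B'' A'' d hA'' hB'' hM'',
      fun h => absurd hneg (not_lt.mpr h),
      fun _ => ⟨by rw [hd0]; linarith [hσ0 2],
        by rw [hd0, hd1]; linarith, by rw [hd1, hd2]; linarith⟩⟩
end

section
/- Let d₁, d₂, d₃ be real numbers and let Φ_D : Matrix (Fin 2) (Fin 2) ℂ → Matrix (Fin 2) (Fin 2) ℂ be the unique linear map satisfying Φ_D(σ_0) = σ_0 and Φ_D(σ_j) = d_j • σ_j for j = 1, 2, 3. Then Φ_D is completely positive if and only if 1 − d₃ ≥ |d₁ − d₂| and 1 + d₃ ≥ |d₁ + d₂| (the Algoet–Fujiwara conditions), equivalently, if and only if the four numbers (1 + d₁ + d₂ + d₃)/4, (1 + d₁ − d₂ − d₃)/4, (1 − d₁ + d₂ − d₃)/4, (1 − d₁ − d₂ + d₃)/4 are all nonnegative. -/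
open scoped ComplexOrder Matrix

lemma pauli_herm : ∀ i, (pauli i)ᴴ = pauli i := by
  intro i
  fin_cases i <;> ext x y <;> fin_cases x <;> fin_cases y <;>
    simp [pauli, Matrix.conjTranspose_apply]

lemma pauli_conj : ∀ i j : Fin 4, pauli i * pauli j * pauli i =
    (if i = 0 ∨ j = 0 ∨ i = j then 1 else -1 : ℂ) • pauli j := by
  intro i j
  fin_cases i <;> fin_cases j <;>
    (ext x y; fin_cases x <;> fin_cases y <;>
      norm_num [pauli, Matrix.mul_apply, Fin.sum_univ_two, Fin.ext_iff])

set_option maxHeartbeats 1000000 in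
/-- `Φ` is a Pauli channel with (possibly signed) weights given by the Choi eigenvalues. -/
lemma rep (d₁ d₂ d₃ : ℝ)
    (Φ : Matrix (Fin 2) (Fin 2) ℂ →ₗ[ℂ] Matrix (Fin 2) (Fin 2) ℂ)
    (hΦ0 : Φ (pauli 0) = pauli 0)
    (hΦ1 : Φ (pauli 1) = d₁ • pauli 1)
    (hΦ2 : Φ (pauli 2) = d₂ • pauli 2)
    (hΦ3 : Φ (pauli 3) = d₃ • pauli 3) (X : Matrix (Fin 2) (Fin 2) ℂ) :
    Φ X = (((1+d₁+d₂+d₃)/4 : ℝ) : ℂ) • (pauli 0 * X * pauli 0)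
        + (((1+d₁-d₂-d₃)/4 : ℝ) : ℂ) • (pauli 1 * X * pauli 1)
        + (((1-d₁+d₂-d₃)/4 : ℝ) : ℂ) • (pauli 2 * X * pauli 2)
        + (((1-d₁-d₂+d₃)/4 : ℝ) : ℂ) • (pauli 3 * X * pauli 3) := by
  obtain ⟨a, b, c, e, rfl⟩ : ∃ a b c e : ℂ,
      X = a • pauli 0 + b • pauli 1 + c • pauli 2 + e • pauli 3 := by
    refine ⟨(X 0 0 + X 1 1)/2, (X 0 1 + X 1 0)/2, Complex.I * (X 0 1 - X 1 0)/2,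
      (X 0 0 - X 1 1)/2, ?_⟩
    ext i j
    fin_cases i <;> fin_cases j <;>
      simp [pauli] <;> ring_nf <;> simp [Complex.I_sq] <;> ring
  simp only [map_add, map_smul, hΦ0, hΦ1, hΦ2, hΦ3, Matrix.mul_add, Matrix.add_mul,
    Matrix.mul_smul, Matrix.smul_mul, pauli_conj]
  ext i j
  fin_cases i <;> fin_cases j <;>
    simp (config := { decide := true }) [pauli, Matrix.add_apply, Matrix.smul_apply,
      smul_eq_mul, Complex.real_smul, Fin.ext_iff] <;> ring

/-- `1 ⊗ A` as a block matrix. -/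
def kron {m : ℕ} (A : Matrix (Fin 2) (Fin 2) ℂ) :
    Matrix (Fin m × Fin 2) (Fin m × Fin 2) ℂ :=
  Matrix.of fun p q => if p.1 = q.1 then A p.2 q.2 else 0

lemma kron_conj_entry {m : ℕ} (A : Matrix (Fin 2) (Fin 2) ℂ)
    (M : Matrix (Fin m × Fin 2) (Fin m × Fin 2) ℂ) (a b : Fin m) (x y : Fin 2) :
    (((kron A)ᴴ * M * kron A : Matrix (Fin m × Fin 2) (Fin m × Fin 2) ℂ) (a, x) (b, y))
      = ((Aᴴ * (Matrix.of fun u v => M (a, u) (b, v)) * A : Matrix (Fin 2) (Fin 2) ℂ) x y) := by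
  simp only [Matrix.mul_apply, Matrix.conjTranspose_apply, Matrix.of_apply, kron,
    Fintype.sum_prod_type]
  simp [apply_ite, ite_mul, mul_ite, Finset.sum_ite_eq, Finset.sum_ite_eq',
    Finset.mul_sum, Finset.sum_mul]

lemma smul_kron_conj {m : ℕ} (M : Matrix (Fin m × Fin 2) (Fin m × Fin 2) ℂ)
    (r : ℝ) (hr : 0 ≤ r) (A : Matrix (Fin 2) (Fin 2) ℂ) :
    (r : ℂ) • ((kron A)ᴴ * M * kron A)
      = ((Real.sqrt r : ℂ) • kron A)ᴴ * M * ((Real.sqrt r : ℂ) • kron A) := by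
  simp only [Matrix.conjTranspose_smul, Matrix.smul_mul, Matrix.mul_smul, smul_smul,
    Complex.star_def, Complex.conj_ofReal]
  rw [← Complex.ofReal_mul, Real.mul_self_sqrt hr]

lemma cp_of_nonneg (d₁ d₂ d₃ : ℝ)
    (Φ : Matrix (Fin 2) (Fin 2) ℂ →ₗ[ℂ] Matrix (Fin 2) (Fin 2) ℂ)
    (hrep : ∀ X, Φ X = (((1+d₁+d₂+d₃)/4 : ℝ) : ℂ) • (pauli 0 * X * pauli 0)
        + (((1+d₁-d₂-d₃)/4 : ℝ) : ℂ) • (pauli 1 * X * pauli 1)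
        + (((1-d₁+d₂-d₃)/4 : ℝ) : ℂ) • (pauli 2 * X * pauli 2)
        + (((1-d₁-d₂+d₃)/4 : ℝ) : ℂ) • (pauli 3 * X * pauli 3))
    (h0 : 0 ≤ (1+d₁+d₂+d₃)/4) (h1 : 0 ≤ (1+d₁-d₂-d₃)/4)
    (h2 : 0 ≤ (1-d₁+d₂-d₃)/4) (h3 : 0 ≤ (1-d₁-d₂+d₃)/4) :
    CompletelyPositive Φ := by
  intro m hm M hM
  have key : (Matrix.of fun p q : Fin m × Fin 2 =>
      Φ (Matrix.of fun a b : Fin 2 => M (p.1, a) (q.1, b)) p.2 q.2)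
      = (((1+d₁+d₂+d₃)/4 : ℝ) : ℂ) • ((kron (pauli 0))ᴴ * M * kron (pauli 0))
      + (((1+d₁-d₂-d₃)/4 : ℝ) : ℂ) • ((kron (pauli 1))ᴴ * M * kron (pauli 1))
      + (((1-d₁+d₂-d₃)/4 : ℝ) : ℂ) • ((kron (pauli 2))ᴴ * M * kron (pauli 2))
      + (((1-d₁-d₂+d₃)/4 : ℝ) : ℂ) • ((kron (pauli 3))ᴴ * M * kron (pauli 3)) := by
    ext ⟨a, x⟩ ⟨b, y⟩
    simp only [Matrix.of_apply, Matrix.add_apply, Matrix.smul_apply, kron_conj_entry,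
      pauli_herm]
    rw [hrep]
    simp [Matrix.add_apply, Matrix.smul_apply]
  rw [key, smul_kron_conj M _ h0, smul_kron_conj M _ h1, smul_kron_conj M _ h2,
    smul_kron_conj M _ h3]
  exact (((hM.conjTranspose_mul_mul_same _).add (hM.conjTranspose_mul_mul_same _)).add
    (hM.conjTranspose_mul_mul_same _)).add (hM.conjTranspose_mul_mul_same _)

/-- the (unnormalized) maximally entangled projector -/
def entM : Matrix (Fin 2 × Fin 2) (Fin 2 × Fin 2) ℂ :=
  Matrix.of fun p q => (if p.1 = p.2 then 1 else 0) * (if q.1 = q.2 then 1 else 0)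

lemma entM_psd : entM.PosSemidef := by
  have : entM = (Matrix.of fun (_ : Fin 1) (p : Fin 2 × Fin 2) =>
      (if p.1 = p.2 then 1 else 0 : ℂ))ᴴ *
      (Matrix.of fun (_ : Fin 1) (p : Fin 2 × Fin 2) => (if p.1 = p.2 then 1 else 0 : ℂ)) := by
    ext p q
    by_cases h1 : p.1 = p.2 <;> by_cases h2 : q.1 = q.2 <;>
      simp [entM, Matrix.mul_apply, Fin.sum_univ_one, Matrix.conjTranspose_apply, h1, h2]
  rw [this]
  exact Matrix.posSemidef_conjTranspose_mul_self _

set_option maxHeartbeats 1600000 in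
lemma nonneg_of_cp (d₁ d₂ d₃ : ℝ)
    (Φ : Matrix (Fin 2) (Fin 2) ℂ →ₗ[ℂ] Matrix (Fin 2) (Fin 2) ℂ)
    (hrep : ∀ X, Φ X = (((1+d₁+d₂+d₃)/4 : ℝ) : ℂ) • (pauli 0 * X * pauli 0)
        + (((1+d₁-d₂-d₃)/4 : ℝ) : ℂ) • (pauli 1 * X * pauli 1)
        + (((1-d₁+d₂-d₃)/4 : ℝ) : ℂ) • (pauli 2 * X * pauli 2)
        + (((1-d₁-d₂+d₃)/4 : ℝ) : ℂ) • (pauli 3 * X * pauli 3))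
    (hcp : CompletelyPositive Φ) :
    0 ≤ (1+d₁+d₂+d₃)/4 ∧ 0 ≤ (1+d₁-d₂-d₃)/4 ∧ 0 ≤ (1-d₁+d₂-d₃)/4 ∧ 0 ≤ (1-d₁-d₂+d₃)/4 := by
  have hO := hcp 2 (by norm_num) entM entM_psd
  have qf : ∀ j : Fin 4, 0 ≤ dotProduct (star (fun p : Fin 2 × Fin 2 => pauli j p.2 p.1))
      ((Matrix.of fun p q : Fin 2 × Fin 2 =>
        Φ (Matrix.of fun a b : Fin 2 => entM (p.1, a) (q.1, b)) p.2 q.2) *ᵥ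
        (fun p : Fin 2 × Fin 2 => pauli j p.2 p.1)) := fun j => hO.dotProduct_mulVec_nonneg _
  have key : ∀ j : Fin 4, ∀ r : ℝ, ((r : ℂ) = dotProduct
      (star (fun p : Fin 2 × Fin 2 => pauli j p.2 p.1))
      ((Matrix.of fun p q : Fin 2 × Fin 2 =>
        Φ (Matrix.of fun a b : Fin 2 => entM (p.1, a) (q.1, b)) p.2 q.2) *ᵥ
        (fun p : Fin 2 × Fin 2 => pauli j p.2 p.1))) → 0 ≤ r := by
    intro j r h
    have := qf j
    rw [← h] at this
    exact Complex.zero_le_real.mp this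
  refine ⟨?_, ?_, ?_, ?_⟩
  · have := key 0 (1+d₁+d₂+d₃) ?_
    · linarith
    · simp [dotProduct, Matrix.mulVec, Fintype.sum_prod_type, Fin.sum_univ_two,
        hrep, Matrix.mul_apply, Matrix.add_apply, Matrix.smul_apply, Matrix.of_apply,
        pauli, entM, Pi.star_apply, Matrix.vecHead, Matrix.vecTail]
      ring
  · have := key 1 (1+d₁-d₂-d₃) ?_
    · linarith
    · simp [dotProduct, Matrix.mulVec, Fintype.sum_prod_type, Fin.sum_univ_two,
        hrep, Matrix.mul_apply, Matrix.add_apply, Matrix.smul_apply, Matrix.of_apply,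
        pauli, entM, Pi.star_apply, Matrix.vecHead, Matrix.vecTail]
      ring
  · have := key 2 (1-d₁+d₂-d₃) ?_
    · linarith
    · simp [dotProduct, Matrix.mulVec, Fintype.sum_prod_type, Fin.sum_univ_two,
        hrep, Matrix.mul_apply, Matrix.add_apply, Matrix.smul_apply, Matrix.of_apply,
        pauli, entM, Pi.star_apply, Matrix.vecHead, Matrix.vecTail]
      ring_nf
      simp [Complex.I_sq]
      ring
  · have := key 3 (1-d₁-d₂+d₃) ?_
    · linarith
    · simp [dotProduct, Matrix.mulVec, Fintype.sum_prod_type, Fin.sum_univ_two,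
        hrep, Matrix.mul_apply, Matrix.add_apply, Matrix.smul_apply, Matrix.of_apply,
        pauli, entM, Pi.star_apply, Matrix.vecHead, Matrix.vecTail]
      ring

theorem stmt_5 (d₁ d₂ d₃ : ℝ)
    (Φ : Matrix (Fin 2) (Fin 2) ℂ →ₗ[ℂ] Matrix (Fin 2) (Fin 2) ℂ)
    (hΦ0 : Φ (pauli 0) = pauli 0)
    (hΦ1 : Φ (pauli 1) = d₁ • pauli 1)
    (hΦ2 : Φ (pauli 2) = d₂ • pauli 2)
    (hΦ3 : Φ (pauli 3) = d₃ • pauli 3) :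
    (CompletelyPositive Φ ↔ (|d₁ - d₂| ≤ 1 - d₃ ∧ |d₁ + d₂| ≤ 1 + d₃)) ∧
    (CompletelyPositive Φ ↔
      (0 ≤ (1 + d₁ + d₂ + d₃) / 4 ∧ 0 ≤ (1 + d₁ - d₂ - d₃) / 4 ∧
       0 ≤ (1 - d₁ + d₂ - d₃) / 4 ∧ 0 ≤ (1 - d₁ - d₂ + d₃) / 4)) := by
  have hrep := rep d₁ d₂ d₃ Φ hΦ0 hΦ1 hΦ2 hΦ3
  have main : CompletelyPositive Φ ↔
      (0 ≤ (1 + d₁ + d₂ + d₃) / 4 ∧ 0 ≤ (1 + d₁ - d₂ - d₃) / 4 ∧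
       0 ≤ (1 - d₁ + d₂ - d₃) / 4 ∧ 0 ≤ (1 - d₁ - d₂ + d₃) / 4) := by
    constructor
    · exact nonneg_of_cp d₁ d₂ d₃ Φ hrep
    · rintro ⟨h0, h1, h2, h3⟩
      exact cp_of_nonneg d₁ d₂ d₃ Φ hrep h0 h1 h2 h3
  refine ⟨?_, main⟩
  rw [main]
  constructor
  · rintro ⟨h0, h1, h2, h3⟩
    constructor <;> rw [abs_le] <;> constructor <;> linarith
  · rintro ⟨ha, hb⟩
    rw [abs_le] at ha hb
    refine ⟨?_, ?_, ?_, ?_⟩ <;> linarith [ha.1, ha.2, hb.1, hb.2]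
end

section
/- Let A be a real 3×3 matrix with AᵀA = 1 and det A = 1 (a rotation matrix). Then there exists a unitary 2×2 complex matrix U such that for every r = (r₁, r₂, r₃) ∈ ℝ³, U * (∑_{i=1}^3 r_i • σ_i) * Uᴴ = ∑_{i=1}^3 (A r)_i • σ_i; equivalently, U * ((σ_0 + ∑_i r_i • σ_i)/2) * Uᴴ = (σ_0 + ∑_i (A r)_i • σ_i)/2 for all r. -/
open scoped Matrix

noncomputable section
open Complex Matrix

def Rz (θ : ℝ) : Matrix (Fin 3) (Fin 3) ℝ :=
  !![Real.cos θ, -Real.sin θ, 0; Real.sin θ, Real.cos θ, 0; 0, 0, 1]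

def Ry (θ : ℝ) : Matrix (Fin 3) (Fin 3) ℝ :=
  !![Real.cos θ, 0, Real.sin θ; 0, 1, 0; -Real.sin θ, 0, Real.cos θ]

def Impl (A : Matrix (Fin 3) (Fin 3) ℝ) : Prop :=
  ∃ U : Matrix (Fin 2) (Fin 2) ℂ, U * Uᴴ = 1 ∧
    ∀ r : Fin 3 → ℝ,
      U * (∑ i : Fin 3, r i • pauli i.succ) * Uᴴ = ∑ i : Fin 3, A.mulVec r i • pauli i.succ

lemma sum_pauli (r : Fin 3 → ℝ) :
    ∑ i : Fin 3, r i • pauli i.succ =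
      !![(r 2 : ℂ), (r 0 : ℂ) - r 1 * I; (r 0 : ℂ) + r 1 * I, -(r 2 : ℂ)] := by
  ext i j
  fin_cases i <;> fin_cases j <;> simp [pauli, Fin.sum_univ_three] <;> ring

lemma ctz (c s : ℝ) :
    (!![(c:ℂ) - s*I, 0; 0, (c:ℂ) + s*I])ᴴ = !![(c:ℂ) + s*I, 0; 0, (c:ℂ) - s*I] := by
  ext i j; fin_cases i <;> fin_cases j <;> simp <;> ring

lemma cty (c s : ℝ) :
    (!![(c:ℂ), -(s:ℂ); (s:ℂ), (c:ℂ)])ᴴ = !![(c:ℂ), (s:ℂ); -(s:ℂ), (c:ℂ)] := by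
  ext i j; fin_cases i <;> fin_cases j <;> simp

lemma unit_z (c s : ℝ) (h : s^2 + c^2 = 1) :
    !![(c:ℂ) - s*I, 0; 0, (c:ℂ) + s*I] * !![(c:ℂ) + s*I, 0; 0, (c:ℂ) - s*I] = 1 := by
  ext i j
  fin_cases i <;> fin_cases j <;>
    simp [Matrix.mul_apply, Fin.sum_univ_two, Matrix.one_apply, Complex.ext_iff,
      ← Complex.ofReal_pow]
  all_goals try constructor
  all_goals first
    | trivial
    | ring1
    | linear_combination h
    | linear_combination (-1 : ℝ) * h

lemma unit_y (c s : ℝ) (h : s^2 + c^2 = 1) :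
    !![(c:ℂ), -(s:ℂ); (s:ℂ), (c:ℂ)] * !![(c:ℂ), (s:ℂ); -(s:ℂ), (c:ℂ)] = 1 := by
  ext i j
  fin_cases i <;> fin_cases j <;>
    simp [Matrix.mul_apply, Fin.sum_univ_two, Matrix.one_apply, Complex.ext_iff,
      ← Complex.ofReal_pow]
  all_goals try constructor
  all_goals first
    | trivial
    | ring1
    | linear_combination h
    | linear_combination (-1 : ℝ) * h

lemma key_z (c s : ℝ) (h : s^2 + c^2 = 1) (r0 r1 r2 : ℝ) :
    !![(c:ℂ) - s*I, 0; 0, (c:ℂ) + s*I] *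
      !![(r2:ℂ), (r0:ℂ) - r1*I; (r0:ℂ) + r1*I, -(r2:ℂ)] *
        !![(c:ℂ) + s*I, 0; 0, (c:ℂ) - s*I] =
    !![(r2:ℂ),
       ((c^2-s^2)*r0 - (2*s*c)*r1 : ℂ) - ((2*s*c)*r0 + (c^2-s^2)*r1 : ℂ)*I;
       ((c^2-s^2)*r0 - (2*s*c)*r1 : ℂ) + ((2*s*c)*r0 + (c^2-s^2)*r1 : ℂ)*I,
       -(r2:ℂ)] := by
  ext i j
  fin_cases i <;> fin_cases j <;>
    simp [Matrix.mul_apply, Fin.sum_univ_two, Complex.ext_iff, ← Complex.ofReal_pow]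
  all_goals try constructor
  all_goals first
    | trivial
    | ring1
    | linear_combination r0 * h
    | linear_combination (-r0) * h
    | linear_combination r1 * h
    | linear_combination (-r1) * h
    | linear_combination r2 * h
    | linear_combination (-r2) * h

lemma key_y (c s : ℝ) (h : s^2 + c^2 = 1) (r0 r1 r2 : ℝ) :
    !![(c:ℂ), -(s:ℂ); (s:ℂ), (c:ℂ)] *
      !![(r2:ℂ), (r0:ℂ) - r1*I; (r0:ℂ) + r1*I, -(r2:ℂ)] *
        !![(c:ℂ), (s:ℂ); -(s:ℂ), (c:ℂ)] =
    !![(-(2*s*c)*r0 + (c^2-s^2)*r2 : ℂ),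
       ((c^2-s^2)*r0 + (2*s*c)*r2 : ℂ) - (r1:ℂ)*I;
       ((c^2-s^2)*r0 + (2*s*c)*r2 : ℂ) + (r1:ℂ)*I,
       -(-(2*s*c)*r0 + (c^2-s^2)*r2 : ℂ)] := by
  ext i j
  fin_cases i <;> fin_cases j <;>
    simp [Matrix.mul_apply, Fin.sum_univ_two, Complex.ext_iff, ← Complex.ofReal_pow]
  all_goals try constructor
  all_goals first
    | trivial
    | ring1
    | linear_combination r0 * h
    | linear_combination (-r0) * h
    | linear_combination r1 * h
    | linear_combination (-r1) * h
    | linear_combination r2 * h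
    | linear_combination (-r2) * h

lemma impl_mul {A B : Matrix (Fin 3) (Fin 3) ℝ} (hA : Impl A) (hB : Impl B) : Impl (A * B) := by
  obtain ⟨U, hU, hUr⟩ := hA
  obtain ⟨V, hV, hVr⟩ := hB
  refine ⟨U * V, ?_, fun r => ?_⟩
  · rw [conjTranspose_mul, mul_assoc, ← mul_assoc V, hV, one_mul, hU]
  · rw [conjTranspose_mul, ← Matrix.mulVec_mulVec]
    calc U * V * (∑ i : Fin 3, r i • pauli i.succ) * (Vᴴ * Uᴴ)
        = U * (V * (∑ i : Fin 3, r i • pauli i.succ) * Vᴴ) * Uᴴ := by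
          simp only [mul_assoc]
      _ = U * (∑ i : Fin 3, B.mulVec r i • pauli i.succ) * Uᴴ := by rw [hVr]
      _ = _ := hUr _

lemma cos_half_eq (θ : ℝ) : Real.cos θ = Real.cos (θ/2)^2 - Real.sin (θ/2)^2 := by
  have h1 := Real.cos_two_mul (θ/2)
  have h2 : 2 * (θ/2) = θ := by ring
  rw [h2] at h1
  nlinarith [Real.sin_sq_add_cos_sq (θ/2)]

lemma sin_half_eq (θ : ℝ) : Real.sin θ = 2 * Real.sin (θ/2) * Real.cos (θ/2) := by
  have h1 := Real.sin_two_mul (θ/2)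
  have h2 : 2 * (θ/2) = θ := by ring
  rw [h2] at h1
  linarith

lemma impl_Rz (θ : ℝ) : Impl (Rz θ) := by
  set c := Real.cos (θ/2)
  set s := Real.sin (θ/2)
  have h : s^2 + c^2 = 1 := Real.sin_sq_add_cos_sq _
  refine ⟨!![(c:ℂ) - s*I, 0; 0, (c:ℂ) + s*I], ?_, fun r => ?_⟩
  · rw [ctz]; exact unit_z c s h
  · rw [ctz, sum_pauli, sum_pauli, key_z c s h]
    have hmv0 : (Rz θ).mulVec r 0 = (c^2-s^2) * r 0 - (2*s*c) * r 1 := by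
      simp [Rz, Matrix.mulVec, dotProduct, Fin.sum_univ_three]
      rw [cos_half_eq θ, sin_half_eq θ]; try ring
    have hmv1 : (Rz θ).mulVec r 1 = (2*s*c) * r 0 + (c^2-s^2) * r 1 := by
      simp [Rz, Matrix.mulVec, dotProduct, Fin.sum_univ_three]
      rw [cos_half_eq θ, sin_half_eq θ]; try ring
    have hmv2 : (Rz θ).mulVec r 2 = r 2 := by
      simp [Rz, Matrix.mulVec, dotProduct, Fin.sum_univ_three]
    rw [hmv0, hmv1, hmv2]
    push_cast
    ring_nf

lemma impl_Ry (θ : ℝ) : Impl (Ry θ) := by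
  set c := Real.cos (θ/2)
  set s := Real.sin (θ/2)
  have h : s^2 + c^2 = 1 := Real.sin_sq_add_cos_sq _
  refine ⟨!![(c:ℂ), -(s:ℂ); (s:ℂ), (c:ℂ)], ?_, fun r => ?_⟩
  · rw [cty]; exact unit_y c s h
  · rw [cty, sum_pauli, sum_pauli, key_y c s h]
    have hmv0 : (Ry θ).mulVec r 0 = (c^2-s^2) * r 0 + (2*s*c) * r 2 := by
      simp [Ry, Matrix.mulVec, dotProduct, Fin.sum_univ_three]
      rw [cos_half_eq θ, sin_half_eq θ]; try ring
    have hmv1 : (Ry θ).mulVec r 1 = r 1 := by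
      simp [Ry, Matrix.mulVec, dotProduct, Fin.sum_univ_three]
    have hmv2 : (Ry θ).mulVec r 2 = -(2*s*c) * r 0 + (c^2-s^2) * r 2 := by
      simp [Ry, Matrix.mulVec, dotProduct, Fin.sum_univ_three]
      rw [cos_half_eq θ, sin_half_eq θ]; try ring
    rw [hmv0, hmv1, hmv2]
    push_cast
    ring_nf

lemma Rz_transpose (θ : ℝ) :
    (Rz θ)ᵀ = !![Real.cos θ, Real.sin θ, 0; -Real.sin θ, Real.cos θ, 0; 0, 0, 1] := by
  ext i j
  fin_cases i <;> fin_cases j <;> simp [Rz]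

lemma Ry_transpose (θ : ℝ) :
    (Ry θ)ᵀ = !![Real.cos θ, 0, -Real.sin θ; 0, 1, 0; Real.sin θ, 0, Real.cos θ] := by
  ext i j
  fin_cases i <;> fin_cases j <;> simp [Ry]

lemma Rz_mul_transpose (θ : ℝ) : Rz θ * (Rz θ)ᵀ = 1 := by
  rw [Rz_transpose]
  ext i j
  fin_cases i <;> fin_cases j <;>
    simp [Rz, Matrix.mul_apply, Fin.sum_univ_three, Matrix.one_apply]
  all_goals first
    | ring1
    | linear_combination Real.sin_sq_add_cos_sq θ
    | linear_combination (-1 : ℝ) * Real.sin_sq_add_cos_sq θ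

lemma Ry_mul_transpose (θ : ℝ) : Ry θ * (Ry θ)ᵀ = 1 := by
  rw [Ry_transpose]
  ext i j
  fin_cases i <;> fin_cases j <;>
    simp [Ry, Matrix.mul_apply, Fin.sum_univ_three, Matrix.one_apply]
  all_goals first
    | ring1
    | linear_combination Real.sin_sq_add_cos_sq θ
    | linear_combination (-1 : ℝ) * Real.sin_sq_add_cos_sq θ

lemma det_Rz (θ : ℝ) : (Rz θ).det = 1 := by
  simp [Rz, Matrix.det_fin_three]
  linear_combination Real.sin_sq_add_cos_sq θ

lemma det_Ry (θ : ℝ) : (Ry θ).det = 1 := by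
  simp [Ry, Matrix.det_fin_three]
  linear_combination Real.sin_sq_add_cos_sq θ

lemma euler (A : Matrix (Fin 3) (Fin 3) ℝ) (hA : Aᵀ * A = 1) (hdet : A.det = 1) :
    ∃ α β γ, A = Rz α * (Ry β * Rz γ) := by
  have hv : A 0 2 ^ 2 + A 1 2 ^ 2 + A 2 2 ^ 2 = 1 := by
    have h := congrFun (congrFun hA 2) 2
    simp [Matrix.mul_apply, Matrix.transpose_apply, Matrix.one_apply, Fin.sum_univ_three] at h
    linear_combination h
  -- spherical coordinates for the third column
  obtain ⟨β, hβdef⟩ : ∃ b, b = Real.arccos (A 2 2) := ⟨_, rfl⟩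
  have hcβ : Real.cos β = A 2 2 := by
    rw [hβdef]; exact Real.cos_arccos (by nlinarith) (by nlinarith)
  have hsβ : Real.sin β = Real.sqrt (1 - A 2 2 ^ 2) := by rw [hβdef]; exact Real.sin_arccos _
  obtain ⟨z, hzdef⟩ : ∃ w : ℂ, w = (A 0 2 : ℂ) + A 1 2 * Complex.I := ⟨_, rfl⟩
  obtain ⟨α, hαdef⟩ : ∃ a, a = z.arg := ⟨_, rfl⟩
  have hzre : z.re = A 0 2 := by rw [hzdef]; simp
  have hzim : z.im = A 1 2 := by rw [hzdef]; simp
  have habs : ‖z‖ = Real.sin β := by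
    rw [hsβ, Complex.norm_def, Complex.normSq_apply, hzre, hzim]
    congr 1
    linarith
  have hz := Complex.norm_mul_cos_add_sin_mul_I z
  rw [← hαdef, ← Complex.ofReal_cos, ← Complex.ofReal_sin, habs] at hz
  have h0 : A 0 2 = Real.sin β * Real.cos α := by
    have h := congrArg Complex.re hz
    simp only [Complex.mul_re, Complex.add_re, Complex.add_im, Complex.mul_im,
      Complex.ofReal_re, Complex.ofReal_im, Complex.I_re, Complex.I_im, hzre] at h
    linear_combination -h
  have h1 : A 1 2 = Real.sin β * Real.sin α := by
    have h := congrArg Complex.im hz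
    simp only [Complex.mul_re, Complex.add_re, Complex.add_im, Complex.mul_im,
      Complex.ofReal_re, Complex.ofReal_im, Complex.I_re, Complex.I_im, hzim] at h
    linear_combination -h
  have h2 : A 2 2 = Real.cos β := hcβ.symm
  -- the matrix B
  obtain ⟨B, hBdef⟩ : ∃ B, B = (Ry β)ᵀ * ((Rz α)ᵀ * A) := ⟨_, rfl⟩
  have hABz : Rz α * (Ry β * B) = A := by
    rw [hBdef, show Ry β * ((Ry β)ᵀ * ((Rz α)ᵀ * A)) = (Ry β * (Ry β)ᵀ) * ((Rz α)ᵀ * A) from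
      (mul_assoc _ _ _).symm, Ry_mul_transpose, one_mul,
      show Rz α * ((Rz α)ᵀ * A) = (Rz α * (Rz α)ᵀ) * A from (mul_assoc _ _ _).symm,
      Rz_mul_transpose, one_mul]
  have hBo : Bᵀ * B = 1 := by
    rw [hBdef]
    simp only [Matrix.transpose_mul, Matrix.transpose_transpose, Matrix.mul_assoc]
    rw [show Ry β * ((Ry β)ᵀ * ((Rz α)ᵀ * A)) = (Ry β * (Ry β)ᵀ) * ((Rz α)ᵀ * A) from
      (mul_assoc _ _ _).symm, Ry_mul_transpose, one_mul,
      show Rz α * ((Rz α)ᵀ * A) = (Rz α * (Rz α)ᵀ) * A from (mul_assoc _ _ _).symm,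
      Rz_mul_transpose, one_mul, hA]
  have hBr : B * Bᵀ = 1 := mul_eq_one_comm.mp hBo
  have hdetB : B.det = 1 := by
    rw [hBdef]
    simp [Matrix.det_mul, Matrix.det_transpose, det_Rz, det_Ry, hdet]
  -- third column of B is e3
  have hBc : ∀ i, B i 2 = (Ry β)ᵀ.mulVec ((Rz α)ᵀ.mulVec (fun k => A k 2)) i := by
    intro i
    rw [hBdef, Matrix.mulVec_mulVec]
    simp [Matrix.mul_apply, Matrix.mulVec, dotProduct, Fin.sum_univ_three]
    ring
  have hB02 : B 0 2 = 0 := by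
    rw [hBc 0, Rz_transpose, Ry_transpose]
    simp [Matrix.mulVec, dotProduct, Fin.sum_univ_three, h0, h1, h2]
    linear_combination (Real.cos β * Real.sin β) * Real.sin_sq_add_cos_sq α
  have hB12 : B 1 2 = 0 := by
    rw [hBc 1, Rz_transpose, Ry_transpose]
    simp [Matrix.mulVec, dotProduct, Fin.sum_univ_three, h0, h1, h2]
    ring
  have hB22 : B 2 2 = 1 := by
    rw [hBc 2, Rz_transpose, Ry_transpose]
    simp [Matrix.mulVec, dotProduct, Fin.sum_univ_three, h0, h1, h2]
    linear_combination (Real.sin β ^ 2) * Real.sin_sq_add_cos_sq α + Real.sin_sq_add_cos_sq β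
  -- third row of B is e3
  have hrow : B 2 0 ^ 2 + B 2 1 ^ 2 = 0 := by
    have h := congrFun (congrFun hBr 2) 2
    simp [Matrix.mul_apply, Matrix.transpose_apply, Fin.sum_univ_three, Matrix.one_apply,
      hB22] at h
    linear_combination h
  have hB20 : B 2 0 = 0 := by nlinarith [sq_nonneg (B 2 0), sq_nonneg (B 2 1)]
  have hB21 : B 2 1 = 0 := by nlinarith [sq_nonneg (B 2 0), sq_nonneg (B 2 1)]
  -- 2x2 block
  have hac : B 0 0 ^ 2 + B 1 0 ^ 2 = 1 := by
    have h := congrFun (congrFun hBo 0) 0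
    simp [Matrix.mul_apply, Matrix.transpose_apply, Fin.sum_univ_three, Matrix.one_apply,
      hB20] at h
    linear_combination h
  have habcd : B 0 0 * B 0 1 + B 1 0 * B 1 1 = 0 := by
    have h := congrFun (congrFun hBo 0) 1
    simp [Matrix.mul_apply, Matrix.transpose_apply, Fin.sum_univ_three, Matrix.one_apply,
      hB20, hB21] at h
    linear_combination h
  have hdB : B 0 0 * B 1 1 - B 0 1 * B 1 0 = 1 := by
    have h := hdetB
    rw [Matrix.det_fin_three] at h
    rw [hB02, hB12, hB20, hB21, hB22] at h
    linear_combination h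
  -- gamma
  obtain ⟨w, hwdef⟩ : ∃ w : ℂ, w = (B 0 0 : ℂ) + B 1 0 * Complex.I := ⟨_, rfl⟩
  obtain ⟨γ, hγdef⟩ : ∃ g, g = w.arg := ⟨_, rfl⟩
  have hwre : w.re = B 0 0 := by rw [hwdef]; simp
  have hwim : w.im = B 1 0 := by rw [hwdef]; simp
  have habsw : ‖w‖ = 1 := by
    rw [Complex.norm_def, Complex.normSq_apply, hwre, hwim]
    rw [show B 0 0 * B 0 0 + B 1 0 * B 1 0 = 1 from by linear_combination hac]
    exact Real.sqrt_one
  have hw := Complex.norm_mul_cos_add_sin_mul_I w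
  rw [← hγdef, ← Complex.ofReal_cos, ← Complex.ofReal_sin, habsw] at hw
  have hg0 : B 0 0 = Real.cos γ := by
    have h := congrArg Complex.re hw
    simp only [Complex.mul_re, Complex.add_re, Complex.add_im, Complex.mul_im,
      Complex.ofReal_re, Complex.ofReal_im, Complex.I_re, Complex.I_im, Complex.one_re,
      Complex.one_im, hwre] at h
    linear_combination -h
  have hg1 : B 1 0 = Real.sin γ := by
    have h := congrArg Complex.im hw
    simp only [Complex.mul_re, Complex.add_re, Complex.add_im, Complex.mul_im,
      Complex.ofReal_re, Complex.ofReal_im, Complex.I_re, Complex.I_im, Complex.one_re,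
      Complex.one_im, hwim] at h
    linear_combination -h
  have hd : B 1 1 = B 0 0 := by linear_combination B 0 0 * hdB + B 1 0 * habcd - B 1 1 * hac
  have hb : B 0 1 = -B 1 0 := by linear_combination (-(B 1 0)) * hdB + B 0 0 * habcd - B 0 1 * hac
  have hBRz : B = Rz γ := by
    ext i j
    fin_cases i <;> fin_cases j <;>
      simp [Rz, hB02, hB12, hB20, hB21, hB22, hd, hb, hg0, hg1]
  exact ⟨α, β, γ, by rw [← hABz, hBRz]⟩

lemma pauli_zero : pauli 0 = 1 := by
  ext i j
  fin_cases i <;> fin_cases j <;> simp [pauli, Matrix.one_apply]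

end

theorem stmt_10 (A : Matrix (Fin 3) (Fin 3) ℝ) (hA : Aᵀ * A = 1) (hdet : A.det = 1) :
    ∃ U : Matrix (Fin 2) (Fin 2) ℂ, U * Uᴴ = 1 ∧
      (∀ r : Fin 3 → ℝ,
        U * (∑ i : Fin 3, r i • pauli i.succ) * Uᴴ =
          ∑ i : Fin 3, A.mulVec r i • pauli i.succ) ∧
      (∀ r : Fin 3 → ℝ,
        U * (((1 : ℝ) / 2) • (pauli 0 + ∑ i : Fin 3, r i • pauli i.succ)) * Uᴴ =
          ((1 : ℝ) / 2) • (pauli 0 + ∑ i : Fin 3, A.mulVec r i • pauli i.succ)) := by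
  obtain ⟨α, β, γ, hE⟩ := euler A hA hdet
  have hI : Impl A := by
    rw [hE]
    exact impl_mul (impl_Rz α) (impl_mul (impl_Ry β) (impl_Rz γ))
  obtain ⟨U, hU, hUr⟩ := hI
  refine ⟨U, hU, hUr, fun r => ?_⟩
  rw [Matrix.mul_smul, Matrix.smul_mul]
  congr 1
  rw [mul_add, add_mul, pauli_zero, mul_one, hU, hUr r]
end

section
/- Let N ≥ 1 and let U be a unitary N×N complex matrix. Consider the real vector space V of traceless self-adjoint N×N complex matrices (X with Xᴴ = X and trace X = 0), and let T : V → V be the ℝ-linear map T(X) = U * X * Uᴴ. Then T is an isometry for the Frobenius (Hilbert–Schmidt) norm — i.e., trace((T X)ᴴ * (T X)) = trace(Xᴴ * X) for all X ∈ V — and the determinant of T as an ℝ-linear endomorphism of V equals 1. In particular, the Bloch matrix of a unitary quantum operator is a rotation. -/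
open scoped Matrix Kronecker

/-- The real vector space of traceless self-adjoint `N × N` complex matrices. -/
noncomputable def tracelessSelfAdjoint (N : ℕ) : Submodule ℝ (Matrix (Fin N) (Fin N) ℂ) where
  carrier := {X | Xᴴ = X ∧ X.trace = 0}
  add_mem' := by
    rintro X Y ⟨hX1, hX2⟩ ⟨hY1, hY2⟩
    exact ⟨by rw [Matrix.conjTranspose_add, hX1, hY1],
      by rw [Matrix.trace_add, hX2, hY2, add_zero]⟩
  zero_mem' := ⟨by simp, by simp⟩
  smul_mem' := by
    rintro c X ⟨hX1, hX2⟩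
    exact ⟨by rw [Matrix.conjTranspose_smul, star_trivial, hX1],
      by rw [Matrix.trace_smul, hX2, smul_zero]⟩

/-- Hermitian (self-adjoint) matrices as a real submodule. -/
noncomputable def hermSub (N : ℕ) : Submodule ℝ (Matrix (Fin N) (Fin N) ℂ) where
  carrier := {X | Xᴴ = X}
  add_mem' := by rintro X Y hX hY; simp_all [Matrix.conjTranspose_add]
  zero_mem' := by simp
  smul_mem' := by rintro c X hX; simp_all [Matrix.conjTranspose_smul]

lemma det_prodMap_aux {M₁ M₂ : Type*} [AddCommGroup M₁] [Module ℝ M₁] [AddCommGroup M₂]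
    [Module ℝ M₂] [FiniteDimensional ℝ M₁] [FiniteDimensional ℝ M₂]
    (f : M₁ →ₗ[ℝ] M₁) (g : M₂ →ₗ[ℝ] M₂) :
    LinearMap.det (f.prodMap g) = LinearMap.det f * LinearMap.det g := by
  classical
  let b₁ := Module.Free.chooseBasis ℝ M₁
  let b₂ := Module.Free.chooseBasis ℝ M₂
  rw [← LinearMap.det_toMatrix (b₁.prod b₂), LinearMap.toMatrix_prodMap,
    Matrix.det_fromBlocks_zero₁₂, LinearMap.det_toMatrix, LinearMap.det_toMatrix]

lemma detC_eq (N : ℕ) (U V : Matrix (Fin N) (Fin N) ℂ) :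
    LinearMap.det ((LinearMap.mulRight ℂ V).comp (LinearMap.mulLeft ℂ U))
      = (U.det * V.det) ^ N := by
  classical
  rw [← LinearMap.det_toMatrix (Matrix.stdBasis ℂ (Fin N) (Fin N))]
  have h : LinearMap.toMatrix (Matrix.stdBasis ℂ (Fin N) (Fin N))
      (Matrix.stdBasis ℂ (Fin N) (Fin N))
      ((LinearMap.mulRight ℂ V).comp (LinearMap.mulLeft ℂ U)) = U ⊗ₖ Vᵀ := by
    ext ⟨i, j⟩ ⟨k, l⟩
    rw [LinearMap.toMatrix_apply]
    have : ((LinearMap.mulRight ℂ V).comp (LinearMap.mulLeft ℂ U))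
        (Matrix.stdBasis ℂ (Fin N) (Fin N) (k, l)) = U * Matrix.single k l 1 * V := by
      simp [Matrix.stdBasis_eq_single, mul_assoc]
    rw [this]
    simp [Matrix.stdBasis, Matrix.mul_apply, Matrix.single, Pi.single_apply,
      Finset.mul_sum, ite_and, Finset.sum_ite_eq, mul_comm]
  rw [h, Matrix.det_kronecker, Matrix.det_transpose]
  simp [mul_pow]

lemma realForm_det (N : ℕ) (S : hermSub N →ₗ[ℝ] hermSub N)
    (C : Matrix (Fin N) (Fin N) ℂ →ₗ[ℂ] Matrix (Fin N) (Fin N) ℂ)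
    (hcompat : ∀ x : hermSub N, ((S x : Matrix (Fin N) (Fin N) ℂ)) = C x) :
    (algebraMap ℝ ℂ) (LinearMap.det S) = LinearMap.det C := by
  classical
  let b := Module.Free.chooseBasis ℝ (hermSub N)
  set ι := Module.Free.ChooseBasisIndex ℝ (hermSub N)
  let v : ι → Matrix (Fin N) (Fin N) ℂ := fun i => (b i : Matrix (Fin N) (Fin N) ℂ)
  have hvH : ∀ i, (v i)ᴴ = v i := fun i => (b i).2
  have coe_sum : ∀ (r : ι → ℝ), ((∑ i, r i • b i : hermSub N) : Matrix (Fin N) (Fin N) ℂ)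
      = ∑ i, (r i : ℂ) • v i := by
    intro r
    push_cast
    refine Finset.sum_congr rfl fun i _ => ?_
    exact (algebraMap_smul ℂ (r i) (v i)).symm
  have real_indep : ∀ (r : ι → ℝ), ∑ i, (r i : ℂ) • v i = 0 → r = 0 := by
    intro r hr
    have h0 : (∑ i, r i • b i : hermSub N) = 0 := by
      apply Subtype.ext
      rw [coe_sum]; exact hr
    exact funext (Fintype.linearIndependent_iff.mp b.linearIndependent r h0)
  have li : LinearIndependent ℂ v := by
    rw [Fintype.linearIndependent_iff]
    intro g hg
    have h3 : ∑ i, (starRingEnd ℂ) (g i) • v i = 0 := by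
      have h2 : (∑ i, g i • v i)ᴴ = 0 := by rw [hg]; simp
      rw [← h2]
      simp [Matrix.conjTranspose_sum, Matrix.conjTranspose_smul, hvH]
    have hre : (fun i => (g i).re) = 0 := by
      apply real_indep
      have E : ∑ i, ((2:ℂ) * ((g i).re : ℂ)) • v i = 0 := by
        calc ∑ i, ((2:ℂ) * ((g i).re:ℂ)) • v i = ∑ i, (g i + (starRingEnd ℂ) (g i)) • v i := by
              refine Finset.sum_congr rfl fun i _ => ?_
              rw [Complex.add_conj]; push_cast; ring_nf
          _ = 0 := by simp [add_smul, Finset.sum_add_distrib, hg, h3]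
      have E2 := congrArg (fun M => ((2:ℂ)⁻¹) • M) E
      have h2 : (2:ℂ) ≠ 0 := two_ne_zero
      simp only [Finset.smul_sum, smul_smul, smul_zero, inv_mul_cancel_left₀ h2] at E2
      exact E2
    have him : (fun i => (g i).im) = 0 := by
      apply real_indep
      have E : ∑ i, ((2:ℂ) * Complex.I * ((g i).im : ℂ)) • v i = 0 := by
        calc ∑ i, ((2:ℂ) * Complex.I * ((g i).im:ℂ)) • v i
            = ∑ i, (g i - (starRingEnd ℂ) (g i)) • v i := by
              refine Finset.sum_congr rfl fun i _ => ?_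
              rw [Complex.sub_conj]; push_cast; ring_nf
          _ = 0 := by simp [sub_smul, Finset.sum_sub_distrib, hg, h3]
      have E2 := congrArg (fun M => ((2 * Complex.I:ℂ)⁻¹) • M) E
      have h2I : (2 * Complex.I : ℂ) ≠ 0 := by simp [Complex.I_ne_zero]
      simp only [Finset.smul_sum, smul_smul, smul_zero, inv_mul_cancel_left₀ h2I] at E2
      exact E2
    intro i
    apply Complex.ext
    · simpa using congrFun hre i
    · simpa using congrFun him i
  have hspan : ⊤ ≤ Submodule.span ℂ (Set.range v) := by
    intro X _
    have hmem : ∀ H : Matrix (Fin N) (Fin N) ℂ, Hᴴ = H →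
        H ∈ Submodule.span ℂ (Set.range v) := by
      intro H hH
      have : H = ((⟨H, hH⟩ : hermSub N) : Matrix (Fin N) (Fin N) ℂ) := rfl
      rw [this, ← Module.Basis.sum_repr b ⟨H, hH⟩, coe_sum]
      exact Submodule.sum_mem _ fun k _ => Submodule.smul_mem _ _
        (Submodule.subset_span (Set.mem_range_self k))
    have hX : X = (2:ℂ)⁻¹ • (X + Xᴴ) + Complex.I • ((2:ℂ)⁻¹ • (Complex.I • (Xᴴ - X))) := by
      rw [smul_smul, smul_smul]
      ext i j
      simp only [Matrix.add_apply, Matrix.smul_apply, Matrix.sub_apply, smul_eq_mul]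
      ring_nf
      simp [Complex.I_sq]
      ring
    rw [hX]
    refine Submodule.add_mem _ (Submodule.smul_mem _ _ (hmem _ ?_))
      (Submodule.smul_mem _ _ (hmem _ ?_))
    · simp [Matrix.conjTranspose_add, add_comm]
    · rw [smul_smul, Matrix.conjTranspose_smul, Matrix.conjTranspose_sub]
      have hc : star ((2:ℂ)⁻¹ * Complex.I) = -((2:ℂ)⁻¹ * Complex.I) := by
        simp [Complex.star_def, Complex.conj_I]
      rw [hc, neg_smul, ← smul_neg, neg_sub]
      simp
  let bC : Module.Basis ι ℂ (Matrix (Fin N) (Fin N) ℂ) := Module.Basis.mk li hspan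
  have hmat : LinearMap.toMatrix bC bC C = (LinearMap.toMatrix b b S).map (algebraMap ℝ ℂ) := by
    ext i j
    rw [LinearMap.toMatrix_apply, Matrix.map_apply]
    have h1 : C (bC j) = ∑ k, ((LinearMap.toMatrix b b S k j : ℝ) : ℂ) • bC k := by
      rw [Module.Basis.coe_mk]
      show C (v j) = _
      rw [← hcompat (b j)]
      have : S (b j) = ∑ k, (LinearMap.toMatrix b b S k j) • b k := by
        conv_lhs => rw [← Module.Basis.sum_repr b (S (b j))]
        refine Finset.sum_congr rfl fun k _ => ?_
        rw [LinearMap.toMatrix_apply]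
      rw [this, coe_sum]
    rw [h1, Module.Basis.repr_sum_self]
    rfl
  rw [← LinearMap.det_toMatrix bC, hmat, ← RingHom.mapMatrix_apply, ← RingHom.map_det,
    LinearMap.det_toMatrix]

theorem stmt_11 (N : ℕ) (hN : 1 ≤ N)
    (U : Matrix (Fin N) (Fin N) ℂ) (hU : U * Uᴴ = 1)
    (T : tracelessSelfAdjoint N →ₗ[ℝ] tracelessSelfAdjoint N)
    (hT : ∀ X : tracelessSelfAdjoint N,
      (T X : Matrix (Fin N) (Fin N) ℂ) = U * (X : Matrix (Fin N) (Fin N) ℂ) * Uᴴ) :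
    (∀ X : tracelessSelfAdjoint N,
      ((T X : Matrix (Fin N) (Fin N) ℂ)ᴴ * (T X : Matrix (Fin N) (Fin N) ℂ)).trace =
        ((X : Matrix (Fin N) (Fin N) ℂ)ᴴ * (X : Matrix (Fin N) (Fin N) ℂ)).trace) ∧
    LinearMap.det T = 1 := by
  have hUU : Uᴴ * U = 1 := mul_eq_one_comm.mp hU
  constructor
  · intro X
    rw [hT X]
    set Y := (X : Matrix (Fin N) (Fin N) ℂ)
    have : (U * Y * Uᴴ)ᴴ = U * Yᴴ * Uᴴ := by
      simp [Matrix.conjTranspose_mul, mul_assoc]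
    rw [this]
    calc (U * Yᴴ * Uᴴ * (U * Y * Uᴴ)).trace
        = (U * (Yᴴ * Y) * Uᴴ).trace := by
          rw [show U * Yᴴ * Uᴴ * (U * Y * Uᴴ) = U * Yᴴ * (Uᴴ * U) * Y * Uᴴ by
            noncomm_ring, hUU]
          noncomm_ring
      _ = (Yᴴ * Y).trace := by
          rw [Matrix.trace_mul_cycle, ← mul_assoc, hUU, one_mul]
  · -- determinant part
    classical
    have hNR : (N : ℝ) ≠ 0 := by positivity
    -- the complex conjugation operator
    set C : Matrix (Fin N) (Fin N) ℂ →ₗ[ℂ] Matrix (Fin N) (Fin N) ℂ :=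
      (LinearMap.mulRight ℂ Uᴴ).comp (LinearMap.mulLeft ℂ U) with hC
    have hCapp : ∀ X, C X = U * X * Uᴴ := fun X => rfl
    -- restriction to hermitian matrices
    have hCherm : ∀ x : hermSub N,
        ((C.restrictScalars ℝ).comp (hermSub N).subtype) x ∈ hermSub N := by
      rintro ⟨X, hX⟩
      show (U * X * Uᴴ)ᴴ = U * X * Uᴴ
      have hX' : Xᴴ = X := hX
      simp [Matrix.conjTranspose_mul, mul_assoc, hX']
    set S : hermSub N →ₗ[ℝ] hermSub N :=
      LinearMap.codRestrict (hermSub N) ((C.restrictScalars ℝ).comp (hermSub N).subtype) hCherm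
      with hS
    have hScompat : ∀ x : hermSub N, ((S x : Matrix (Fin N) (Fin N) ℂ)) = C x := fun x => rfl
    -- det S = 1
    have hdetS : LinearMap.det S = 1 := by
      have h1 : (algebraMap ℝ ℂ) (LinearMap.det S) = LinearMap.det C :=
        realForm_det N S C hScompat
      have h2 : LinearMap.det C = 1 := by
        rw [hC, detC_eq, ← Matrix.det_mul, hU, Matrix.det_one, one_pow]
      rw [h2] at h1
      rw [Complex.coe_algebraMap] at h1
      exact_mod_cast h1
    -- the equivalence hermSub ≃ ℝ × traceless
    have traceReal : ∀ x : hermSub N, ((x : Matrix (Fin N) (Fin N) ℂ)).trace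
        = ((((x : Matrix (Fin N) (Fin N) ℂ)).trace.re : ℝ) : ℂ) := by
      rintro ⟨X, hX⟩
      have : star X.trace = X.trace := by
        rw [← Matrix.trace_conjTranspose]
        exact congrArg Matrix.trace hX
      exact (Complex.conj_eq_iff_re.mp this).symm
    have hmemV : ∀ x : hermSub N,
        (x : Matrix (Fin N) (Fin N) ℂ) -
          (((x : Matrix (Fin N) (Fin N) ℂ)).trace.re / N) •
            (1 : Matrix (Fin N) (Fin N) ℂ) ∈ tracelessSelfAdjoint N := by
      rintro ⟨X, hX⟩
      constructor
      · show (X - _)ᴴ = _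
        have hX' : Xᴴ = X := hX
        simp [Matrix.conjTranspose_sub, Matrix.conjTranspose_smul, hX']
      · show (X - _).trace = 0
        rw [Matrix.trace_sub, Matrix.trace_smul, Matrix.trace_one]
        rw [traceReal ⟨X, hX⟩]
        show ((X.trace.re : ℝ) : ℂ) - (X.trace.re / N) • ((Fintype.card (Fin N) : ℕ) : ℂ) = 0
        rw [Fintype.card_fin, sub_eq_zero, Complex.real_smul]
        norm_cast
        rw [div_mul_cancel₀ _ hNR]
    let ψ : ℝ × tracelessSelfAdjoint N →ₗ[ℝ] hermSub N :=
      { toFun := fun p => ⟨(p.1 / N) • (1 : Matrix (Fin N) (Fin N) ℂ)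
            + (p.2 : Matrix (Fin N) (Fin N) ℂ), by
          show (_ + _)ᴴ = _
          have h2 : (p.2 : Matrix (Fin N) (Fin N) ℂ)ᴴ = p.2 := p.2.2.1
          simp [Matrix.conjTranspose_add, Matrix.conjTranspose_smul, h2]⟩
        map_add' := by
          rintro p q
          apply Subtype.ext
          simp only [Prod.fst_add, Prod.snd_add, Submodule.coe_add]
          rw [add_div, add_smul]
          abel
        map_smul' := by
          rintro c p
          apply Subtype.ext
          simp only [Prod.smul_fst, Prod.smul_snd, SetLike.val_smul, smul_eq_mul,
            RingHom.id_apply]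
          rw [mul_div_assoc, ← smul_smul, ← smul_add] }
    let φ : hermSub N →ₗ[ℝ] ℝ × tracelessSelfAdjoint N :=
      { toFun := fun x => (((x : Matrix (Fin N) (Fin N) ℂ)).trace.re,
          ⟨(x : Matrix (Fin N) (Fin N) ℂ) -
            (((x : Matrix (Fin N) (Fin N) ℂ)).trace.re / N) • 1, hmemV x⟩)
        map_add' := by
          rintro x y
          refine Prod.ext ?_ (Subtype.ext ?_)
          · simp [Matrix.trace_add]
          · simp only [Submodule.coe_add, Matrix.trace_add, Complex.add_re,
              Prod.snd_add]
            rw [add_div, add_smul]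
            abel
        map_smul' := by
          rintro c x
          refine Prod.ext ?_ (Subtype.ext ?_)
          · simp [Matrix.trace_smul, Complex.smul_re]
          · simp only [SetLike.val_smul, Matrix.trace_smul, Complex.smul_re,
              RingHom.id_apply, Prod.smul_snd, smul_eq_mul]
            rw [mul_div_assoc, ← smul_smul, ← smul_sub] }
    have hψφ : ψ.comp φ = LinearMap.id := by
      apply LinearMap.ext
      intro x
      apply Subtype.ext
      show (((x : Matrix (Fin N) (Fin N) ℂ)).trace.re / N) • 1 +
        ((x : Matrix (Fin N) (Fin N) ℂ) -
          (((x : Matrix (Fin N) (Fin N) ℂ)).trace.re / N) • 1) = x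
      abel
    have htr : ∀ (r : ℝ) (Y : tracelessSelfAdjoint N),
        ((r / N) • (1 : Matrix (Fin N) (Fin N) ℂ)
          + (Y : Matrix (Fin N) (Fin N) ℂ)).trace.re = r := by
      intro r Y
      rw [Matrix.trace_add, Matrix.trace_smul, Matrix.trace_one, Y.2.2]
      rw [Fintype.card_fin]
      show ((r / N) • ((N:ℕ) : ℂ) + 0).re = r
      rw [add_zero, Complex.real_smul, ← Complex.ofReal_natCast, ← Complex.ofReal_mul,
        Complex.ofReal_re, div_mul_cancel₀ _ hNR]
    have hφψ : φ.comp ψ = LinearMap.id := by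
      apply LinearMap.ext
      rintro ⟨r, Y⟩
      have h1 := htr r Y
      refine Prod.ext ?_ (Subtype.ext ?_)
      · exact h1
      · show ((r / N) • (1 : Matrix (Fin N) (Fin N) ℂ) + (Y : Matrix (Fin N) (Fin N) ℂ))
            - ((((r / N) • (1 : Matrix (Fin N) (Fin N) ℂ)
              + (Y : Matrix (Fin N) (Fin N) ℂ)).trace.re) / N) • 1 = Y
        rw [h1]
        abel
    let e : (ℝ × tracelessSelfAdjoint N) ≃ₗ[ℝ] hermSub N :=
      LinearEquiv.ofLinear ψ φ hψφ hφψ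
    have hconj : S = (e : (ℝ × tracelessSelfAdjoint N) →ₗ[ℝ] hermSub N) ∘ₗ
        ((LinearMap.id : ℝ →ₗ[ℝ] ℝ).prodMap T) ∘ₗ
        (e.symm : hermSub N →ₗ[ℝ] (ℝ × tracelessSelfAdjoint N)) := by
      apply LinearMap.ext
      intro x
      apply Subtype.ext
      set t := ((x : Matrix (Fin N) (Fin N) ℂ)).trace.re with ht
      show U * (x : Matrix (Fin N) (Fin N) ℂ) * Uᴴ =
        (t / N) • 1 + ((T ⟨(x : Matrix (Fin N) (Fin N) ℂ) - (t / N) • 1, hmemV x⟩ :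
          Matrix (Fin N) (Fin N) ℂ))
      rw [hT]
      have expand : U * ((x : Matrix (Fin N) (Fin N) ℂ) - (t / N) • 1) * Uᴴ
          = U * (x : Matrix (Fin N) (Fin N) ℂ) * Uᴴ - (t / N) • (U * Uᴴ) := by
        rw [Matrix.mul_sub, Matrix.sub_mul, Matrix.mul_smul, Matrix.smul_mul, mul_one]
      rw [expand, hU]
      abel
    have hfin : LinearMap.det S = LinearMap.det ((LinearMap.id : ℝ →ₗ[ℝ] ℝ).prodMap T) := by
      rw [hconj, LinearMap.det_conj]
    rw [hdetS, det_prodMap_aux, LinearMap.det_id, one_mul] at hfin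
    exact hfin.symm
end
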